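/- arXiv:2306.05130 — 3 statements merged into one kernel-verified Lean document; each statement's English description precedes it below -/
import Mathlib

section
/- Fix d ≥ 2 and k ≥ 1, and let Λ_m denote the induced subgraph of Z^d on the box [−m,m]^d. Let Ω^1_∅(Λ_m) be the set of configurations ω on the edges of Λ_m such that every vertex v with ∂ω(v) = 1 has sup-norm exactly m (all sources lie on the boundary of the box); this is a subgroup of (ZMod 2)^{E(Λ_m)}. Then the following three probability measures on configurations of Λ_k coincide: (i) the pushforward under restriction to the edges of Λ_k of the uniform measure on Ω_∅(Λ_{k+1}); (ii) the pushforward under restriction to the edges of Λ_k of the uniform measure on Ω^1_∅(Λ_{k+1}); (iii) the uniform measure on Ω^1_∅(Λ_k). -/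
open MeasureTheory

noncomputable section

instance : MeasurableSpace (ZMod 2) := ⊤

/-- The source (mod-2 boundary) of a configuration on a set `E` of edges, at a vertex `v`:
the mod-2 number of open edges incident to `v`. -/
def srcAt {V : Type*} {E : Set (Sym2 V)} (ω : E → ZMod 2) (v : V) : ZMod 2 :=
  (Set.ncard {e : E | ω e = 1 ∧ v ∈ (e : Sym2 V)} : ZMod 2)

/-- A configuration is even (sourceless). -/
def IsEvenConf {V : Type*} {E : Set (Sym2 V)} (ω : E → ZMod 2) : Prop :=
  ∀ v : V, srcAt ω v = 0

/-- `μ` is the uniform even subgraph measure (the Haar probability measure on the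
group of even configurations): a probability measure supported on even configurations
and invariant under translation (symmetric difference) by every even configuration. -/
def IsUEG {V : Type*} (E : Set (Sym2 V)) (μ : Measure (E → ZMod 2)) : Prop :=
  IsProbabilityMeasure μ ∧ μ {ω | IsEvenConf ω} = 1 ∧
    ∀ γ : E → ZMod 2, IsEvenConf γ → Measure.map (fun ω => ω + γ) μ = μ

/-- The graph of open edges of a configuration. -/
def openGraph {V : Type*} {E : Set (Sym2 V)} (ω : E → ZMod 2) : SimpleGraph V :=
  SimpleGraph.fromEdgeSet {e : Sym2 V | ∃ h : e ∈ E, ω ⟨e, h⟩ = 1}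

/-- The connected component of `v` in the graph of open edges is infinite. -/
def PercolatesAt {V : Type*} {E : Set (Sym2 V)} (ω : E → ZMod 2) (v : V) : Prop :=
  {w : V | (openGraph ω).Reachable v w}.Infinite

/-- The hypercubic lattice `ℤ^d`. -/
def latticeGraph (d : ℕ) : SimpleGraph (Fin d → ℤ) where
  Adj u v := ∑ i, |u i - v i| = 1
  symm := ⟨fun u v h => by simpa [abs_sub_comm] using h⟩
  loopless := ⟨fun u h => by simp at h⟩

/-- The edges of the box `Λ_m = [-m,m]^d` (the induced subgraph of `ℤ^d`). -/
def boxEdges (d m : ℕ) : Set (Sym2 (Fin d → ℤ)) :=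
  {e ∈ (latticeGraph d).edgeSet | ∀ v ∈ e, ∀ i, |v i| ≤ (m : ℤ)}

lemma boxEdges_mono (d m : ℕ) : boxEdges d m ⊆ boxEdges d (m + 1) := by
  intro e he
  exact ⟨he.1, fun v hv i => (he.2 v hv i).trans (by push_cast; omega)⟩

/-- Restriction of a configuration to a smaller edge set. -/
def restrictConf {V : Type*} {E' E : Set (Sym2 V)} (h : E' ⊆ E) (ω : E → ZMod 2) :
    E' → ZMod 2 := fun e => ω ⟨e.1, h e.2⟩

/-- Wired even configurations on the box `Λ_m`: all sources lie on the boundary of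
the box, i.e. every vertex `v` with `∂ω(v) = 1` has sup-norm exactly `m`. -/
def wiredEvens (d m : ℕ) : Set (boxEdges d m → ZMod 2) :=
  {ω | ∀ v : Fin d → ℤ, srcAt ω v = 1 →
    (∀ i, |v i| ≤ (m : ℤ)) ∧ ∃ i, |v i| = (m : ℤ)}

/-- The uniform probability measure on a (finite, nonempty) set `S`. -/
def uniformOn {α : Type*} [MeasurableSpace α] (S : Set α) : Measure α :=
  (S.ncard : ENNReal)⁻¹ • Measure.sum (fun s : S => Measure.dirac (s : α))

/-! ### Auxiliary lemmas -/

open scoped Classical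

lemma zmod2_cases (x : ZMod 2) : x = 0 ∨ x = 1 := by fin_cases x; exacts [Or.inl rfl, Or.inr rfl]

lemma srcAt_sum' {V : Type*} [DecidableEq V] {E : Set (Sym2 V)} [Fintype E] (ω : E → ZMod 2) (v : V) :
    srcAt ω v = ∑ e : E, if v ∈ (e : Sym2 V) then ω e else 0 := by
  rw [srcAt, Set.ncard_eq_toFinset_card']
  rw [Set.toFinset_setOf, Finset.card_filter]
  push_cast
  refine Finset.sum_congr rfl fun e _ => ?_
  by_cases hv : v ∈ (e : Sym2 V) <;> rcases zmod2_cases (ω e) with h | h <;>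
    simp [hv, h]

lemma srcAt_add {V : Type*} {E : Set (Sym2 V)} [Finite E] (ω γ : E → ZMod 2) (v : V) :
    srcAt (ω + γ) v = srcAt ω v + srcAt γ v := by
  have := Fintype.ofFinite E
  have := Classical.decEq V
  rw [srcAt_sum', srcAt_sum', srcAt_sum', ← Finset.sum_add_distrib]
  refine Finset.sum_congr rfl fun e _ => ?_
  by_cases hv : v ∈ (e : Sym2 V) <;> simp [hv]

lemma srcAt_zero {V : Type*} {E : Set (Sym2 V)} (v : V) :
    srcAt (0 : E → ZMod 2) v = 0 := by
  have : {e : E | (0 : E → ZMod 2) e = 1 ∧ v ∈ (e : Sym2 V)} = ∅ := by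
    ext e; simp
  rw [srcAt, this]; simp

lemma srcAt_restrict {V : Type*} {E' E : Set (Sym2 V)} (h : E' ⊆ E) (ω : E → ZMod 2)
    (v : V) (hyp : ∀ e : E, ω e = 1 → v ∈ (e : Sym2 V) → (e : Sym2 V) ∈ E') :
    srcAt (restrictConf h ω) v = srcAt ω v := by
  have hinj : Function.Injective (fun e : E' => (⟨e.1, h e.2⟩ : E)) := by
    intro a b hab
    simpa [Subtype.ext_iff] using hab
  have himg : {e : E | ω e = 1 ∧ v ∈ (e : Sym2 V)}
      = (fun e : E' => (⟨e.1, h e.2⟩ : E)) ''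
        {e : E' | restrictConf h ω e = 1 ∧ v ∈ (e : Sym2 V)} := by
    ext e
    constructor
    · rintro ⟨h1, h2⟩
      exact ⟨⟨e.1, hyp e h1 h2⟩, ⟨h1, h2⟩, rfl⟩
    · rintro ⟨e', ⟨h1, h2⟩, rfl⟩
      exact ⟨h1, h2⟩
  rw [srcAt, srcAt, himg, Set.ncard_image_of_injective _ hinj]

lemma boxEdges_finite (d m : ℕ) : (boxEdges d m).Finite := by
  have hB : (Set.pi Set.univ (fun _ : Fin d => Set.Icc (-(m:ℤ)) m)).Finite :=
    Set.Finite.pi (fun _ => Set.finite_Icc _ _)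
  have : boxEdges d m ⊆ Sym2.mk.uncurry '' ((Set.pi Set.univ (fun _ : Fin d => Set.Icc (-(m:ℤ)) m)) ×ˢ
      (Set.pi Set.univ (fun _ : Fin d => Set.Icc (-(m:ℤ)) m))) := by
    intro e he
    induction e with
    | _ a b =>
      refine ⟨(a, b), ⟨?_, ?_⟩, rfl⟩
      · intro i _
        have := he.2 a (Sym2.mem_mk_left a b) i
        simp [Set.mem_Icc]; constructor <;> linarith [abs_le.mp this]
      · intro i _
        have := he.2 b (Sym2.mem_mk_right a b) i
        simp [Set.mem_Icc]; constructor <;> linarith [abs_le.mp this]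
  exact Set.Finite.subset ((hB.prod hB).image _) this

instance boxEdges_finite_inst (d m : ℕ) : Finite (boxEdges d m) :=
  (boxEdges_finite d m).to_subtype

lemma lattice_adj_update (d : ℕ) (u : Fin d → ℤ) (i : Fin d) (c : ℤ) (h : |u i - c| = 1) :
    (latticeGraph d).Adj u (Function.update u i c) := by
  show (∑ j, |u j - Function.update u i c j|) = 1
  rw [Finset.sum_eq_single_of_mem i (Finset.mem_univ i)]
  · simpa using h
  · intro j _ hj
    simp [Function.update_of_ne hj]

lemma update_mem_boxEdges (d m : ℕ) (u : Fin d → ℤ) (i : Fin d) (c : ℤ)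
    (h : |u i - c| = 1) (hb : ∀ j, |u j| ≤ (m:ℤ)) (hc : |c| ≤ (m:ℤ)) :
    s(u, Function.update u i c) ∈ boxEdges d m := by
  refine ⟨(lattice_adj_update d u i c h), ?_⟩
  intro v hv j
  rcases Sym2.mem_iff.mp hv with rfl | rfl
  · exact hb j
  · by_cases hj : j = i
    · subst hj; simpa using hc
    · rw [Function.update_of_ne hj]; exact hb j

lemma not_mem_boxEdges_of_endpoint (d m : ℕ) (u w : Fin d → ℤ) (i : Fin d)
    (hi : (m:ℤ) < |u i|) : s(u, w) ∉ boxEdges d m := by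
  intro h
  exact absurd (h.2 u (Sym2.mem_mk_left u w) i) (not_le.mpr hi)

def pairConf {V : Type*} (E : Set (Sym2 V)) (a b : V) : E → ZMod 2 :=
  fun e => if (e : Sym2 V) = s(a, b) then 1 else 0

lemma srcAt_pairConf {V : Type*} [DecidableEq V] {E : Set (Sym2 V)} {a b : V} (hE : s(a, b) ∈ E)
    (hab : a ≠ b) (v : V) :
    srcAt (pairConf E a b) v = (if v = a then 1 else 0) + (if v = b then 1 else 0) := by
  have hset : {e : E | pairConf E a b e = 1 ∧ v ∈ (e : Sym2 V)}
      = if v ∈ s(a,b) then {(⟨s(a,b), hE⟩ : E)} else ∅ := by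
    ext e
    by_cases hv : v ∈ s(a,b) <;> simp only [hv, if_true, if_false, Set.mem_setOf_eq,
      Set.mem_singleton_iff, Set.mem_empty_iff_false, iff_false]
    · constructor
      · rintro ⟨h1, h2⟩
        have : (e : Sym2 V) = s(a,b) := by
          by_contra hne; simp [pairConf, hne] at h1
        exact Subtype.ext this
      · rintro rfl
        exact ⟨by simp [pairConf], hv⟩
    · rintro ⟨h1, h2⟩
      have : (e : Sym2 V) = s(a,b) := by
        by_contra hne; simp [pairConf, hne] at h1
      rw [this] at h2; exact hv h2
  rw [srcAt, hset]
  by_cases hv : v ∈ s(a,b)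
  · rcases Sym2.mem_iff.mp hv with rfl | rfl
    · simp [hv, hab]
    · simp [hv, Ne.symm hab]
  · rw [Sym2.mem_iff] at hv
    push_neg at hv
    simp [Sym2.mem_iff, hv.1, hv.2, if_neg]

/-! ### Path configurations in the annulus -/

/-- `γ` is a configuration on `Λ_{k+1}` supported outside `Λ_k` with sources exactly `{u, w}`
(mod 2). -/
def SrcPair (d k : ℕ) (γ : boxEdges d (k+1) → ZMod 2) (u w : Fin d → ℤ) : Prop :=
  (∀ e : boxEdges d (k+1), (e : Sym2 (Fin d → ℤ)) ∈ boxEdges d k → γ e = 0) ∧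
  ∀ v, srcAt γ v = (if v = u then 1 else 0) + (if v = w then 1 else 0)

lemma srcPair_refl (d k : ℕ) (u : Fin d → ℤ) : SrcPair d k 0 u u := by
  refine ⟨fun e _ => rfl, fun v => ?_⟩
  rw [srcAt_zero]
  by_cases hv : v = u <;> simp [hv] <;> decide

lemma srcPair_trans {d k : ℕ} {γ₁ γ₂ : boxEdges d (k+1) → ZMod 2} {u w x : Fin d → ℤ}
    (h₁ : SrcPair d k γ₁ u w) (h₂ : SrcPair d k γ₂ w x) : SrcPair d k (γ₁ + γ₂) u x := by
  refine ⟨fun e he => by simp [Pi.add_apply, h₁.1 e he, h₂.1 e he], fun v => ?_⟩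
  rw [srcAt_add, h₁.2 v, h₂.2 v]
  have key : ∀ a b c : ZMod 2, a + b + (b + c) = a + c := by decide
  exact key _ _ _

lemma srcPair_step {d k : ℕ} {u : Fin d → ℤ} {i : Fin d} {c : ℤ}
    (hc : |u i - c| = 1) (hb : ∀ j, |u j| ≤ (k:ℤ)+1) (hcb : |c| ≤ (k:ℤ)+1)
    (hout : s(u, Function.update u i c) ∉ boxEdges d k) :
    SrcPair d k (pairConf (boxEdges d (k+1)) u (Function.update u i c)) u
      (Function.update u i c) := by
  have hE : s(u, Function.update u i c) ∈ boxEdges d (k+1) := by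
    refine update_mem_boxEdges d (k+1) u i c hc (fun j => ?_) ?_
    · exact_mod_cast hb j
    · exact_mod_cast hcb
  have hne : u ≠ Function.update u i c := by
    intro h
    have h2 := congrFun h i
    rw [Function.update_self] at h2
    rw [h2] at hc
    simp at hc
  refine ⟨fun e he => ?_, fun v => (srcAt_pairConf hE hne v).trans (by congr)⟩
  have : (e : Sym2 (Fin d → ℤ)) ≠ s(u, Function.update u i c) := by
    intro h; rw [h] at he; exact hout he
  simp [pairConf, this]

/-- The hub: the corner `(k+1, …, k+1)` of the box `Λ_{k+1}`. -/
def hubV (d k : ℕ) : Fin d → ℤ := fun _ => (k:ℤ)+1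

lemma measure_sum_update (d k : ℕ) (u : Fin d → ℤ) (j : Fin d) :
    (∑ x, ((k:ℤ)+1 - Function.update u j (u j + 1) x)) = (∑ x, ((k:ℤ)+1 - u x)) - 1 := by
  have key : ∀ x ∈ Finset.univ, ((k:ℤ)+1 - Function.update u j (u j + 1) x)
      = ((k:ℤ)+1 - u x) - (if x = j then 1 else 0) := by
    intro x _
    by_cases hx : x = j
    · rw [hx]; simp; ring
    · simp [Function.update_of_ne hx, hx]
  rw [Finset.sum_congr rfl key, Finset.sum_sub_distrib,
    Finset.sum_ite_eq' Finset.univ j (fun _ => (1:ℤ)), if_pos (Finset.mem_univ j)]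

/-- Walk to the hub from a vertex on a positive face of the boundary of `Λ_{k+1}`. -/
lemma srcPair_to_hub_pos (d k : ℕ) :
    ∀ n (u : Fin d → ℤ), (∑ x, ((k:ℤ)+1 - u x)).toNat = n →
      (∀ j, |u j| ≤ (k:ℤ)+1) → (∃ i, u i = (k:ℤ)+1) →
      ∃ γ, SrcPair d k γ u (hubV d k) := by
  intro n
  induction n using Nat.strong_induction_on with
  | _ n ih =>
    intro u hn hb hex
    obtain ⟨i, hi⟩ := hex
    by_cases hu : u = hubV d k
    · exact ⟨0, hu ▸ srcPair_refl d k u⟩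
    · have hne : ∃ j, u j ≠ (k:ℤ)+1 := by
        by_contra hc
        push_neg at hc
        exact hu (funext fun j => hc j)
      obtain ⟨j, hj⟩ := hne
      have hjlt : u j < (k:ℤ)+1 := lt_of_le_of_ne (abs_le.mp (hb j)).2 hj
      have hij : i ≠ j := fun h => hj (h ▸ hi)
      set u' := Function.update u j (u j + 1) with hu'
      have hb' : ∀ x, |u' x| ≤ (k:ℤ)+1 := by
        intro x
        by_cases hx : x = j
        · rw [hu', hx, Function.update_self]
          have := (abs_le.mp (hb j)).1
          rw [abs_le]; omega
        · rw [hu', Function.update_of_ne hx]; exact hb x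
      have hi' : u' i = (k:ℤ)+1 := by
        rw [hu', Function.update_of_ne hij]; exact hi
      have hterm : ∀ x, 0 ≤ (k:ℤ)+1 - u x := fun x => by linarith [(abs_le.mp (hb x)).2]
      have hjpos : 0 < (k:ℤ)+1 - u j := by omega
      have hsumpos : 0 < ∑ x, ((k:ℤ)+1 - u x) :=
        Finset.sum_pos' (fun x _ => hterm x) ⟨j, Finset.mem_univ j, hjpos⟩
      have hdec : (∑ x, ((k:ℤ)+1 - u' x)).toNat < n := by
        rw [hu', measure_sum_update]
        omega
      obtain ⟨γ', hγ'⟩ := ih _ hdec u' rfl hb' ⟨i, hi'⟩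
      have habs : |u j - (u j + 1)| = 1 := by
        rw [abs_sub_comm]; simp
      have hcb : |u j + 1| ≤ (k:ℤ)+1 := by
        have := (abs_le.mp (hb j)).1
        rw [abs_le]; omega
      have hout : s(u, Function.update u j (u j + 1)) ∉ boxEdges d k := by
        refine not_mem_boxEdges_of_endpoint d k u _ i ?_
        rw [hi, abs_of_nonneg] <;> omega
      exact ⟨_, srcPair_trans (srcPair_step habs hb hcb hout) hγ'⟩

/-- Walk to the hub from a vertex on a negative face. -/
lemma srcPair_to_hub_neg (d k : ℕ) (i j : Fin d) (hij : j ≠ i) :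
    ∀ n (u : Fin d → ℤ), ((k:ℤ)+1 - u j).toNat = n →
      (∀ x, |u x| ≤ (k:ℤ)+1) → u i = -((k:ℤ)+1) →
      ∃ γ, SrcPair d k γ u (hubV d k) := by
  intro n
  induction n using Nat.strong_induction_on with
  | _ n ih =>
    intro u hn hb hi
    by_cases hj : u j = (k:ℤ)+1
    · exact srcPair_to_hub_pos d k _ u rfl hb ⟨j, hj⟩
    · have hjlt : u j < (k:ℤ)+1 := lt_of_le_of_ne (abs_le.mp (hb j)).2 hj
      set u' := Function.update u j (u j + 1) with hu'
      have hb' : ∀ x, |u' x| ≤ (k:ℤ)+1 := by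
        intro x
        by_cases hx : x = j
        · rw [hu', hx, Function.update_self]
          have := (abs_le.mp (hb j)).1
          rw [abs_le]; omega
        · rw [hu', Function.update_of_ne hx]; exact hb x
      have hi' : u' i = -((k:ℤ)+1) := by
        rw [hu', Function.update_of_ne (Ne.symm hij)]
        exact hi
      have hdec : ((k:ℤ)+1 - u' j).toNat < n := by
        rw [hu', Function.update_self]
        omega
      obtain ⟨γ', hγ'⟩ := ih _ hdec u' rfl hb' hi'
      have habs : |u j - (u j + 1)| = 1 := by
        rw [abs_sub_comm]; simp
      have hcb : |u j + 1| ≤ (k:ℤ)+1 := by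
        have := (abs_le.mp (hb j)).1
        rw [abs_le]; omega
      have hout : s(u, Function.update u j (u j + 1)) ∉ boxEdges d k := by
        refine not_mem_boxEdges_of_endpoint d k u _ i ?_
        rw [hi, abs_of_nonpos] <;> omega
      exact ⟨_, srcPair_trans (srcPair_step habs hb hcb hout) hγ'⟩

/-- Walk to the hub from a vertex on the boundary of `Λ_k`. -/
lemma srcPair_to_hub (d k : ℕ) (hd : 2 ≤ d) (u : Fin d → ℤ)
    (hb : ∀ j, |u j| ≤ (k:ℤ)) (hbd : ∃ i, |u i| = (k:ℤ)) :
    ∃ γ, SrcPair d k γ u (hubV d k) := by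
  obtain ⟨i, hi⟩ := hbd
  have hb1 : ∀ j, |u j| ≤ (k:ℤ)+1 := fun j => (hb j).trans (by omega)
  rcases abs_eq (by positivity : (0:ℤ) ≤ (k:ℤ)) |>.mp hi with hpos | hneg
  · -- u i = k : step outward to k+1
    set u' := Function.update u i ((k:ℤ)+1) with hu'
    have habs : |u i - ((k:ℤ)+1)| = 1 := by rw [hpos]; simp
    have hcb : |(k:ℤ)+1| ≤ (k:ℤ)+1 := by rw [abs_of_nonneg] <;> omega
    have hout : s(u, u') ∉ boxEdges d k := by
      intro hmem
      have := hmem.2 u' (Sym2.mem_mk_right u u') i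
      rw [hu', Function.update_self] at this
      rw [abs_of_nonneg] at this <;> omega
    have hb' : ∀ x, |u' x| ≤ (k:ℤ)+1 := by
      intro x
      by_cases hx : x = i
      · subst hx; rw [hu', Function.update_self]; exact hcb
      · rw [hu', Function.update_of_ne hx]; exact hb1 x
    obtain ⟨γ', hγ'⟩ := srcPair_to_hub_pos d k _ u' rfl hb'
      ⟨i, by rw [hu', Function.update_self]⟩
    exact ⟨_, srcPair_trans (srcPair_step habs hb1 hcb hout) hγ'⟩
  · -- u i = -k : step outward to -(k+1)
    have hnontriv : Nontrivial (Fin d) :=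
      ⟨⟨⟨0, by omega⟩, ⟨1, by omega⟩, by simp [Fin.ext_iff]⟩⟩
    obtain ⟨j, hj⟩ := exists_ne i
    set u' := Function.update u i (-((k:ℤ)+1)) with hu'
    have habs : |u i - (-((k:ℤ)+1))| = 1 := by
      rw [hneg, show -(k:ℤ) - -((k:ℤ)+1) = 1 by ring]
      simp
    have hcb : |(-((k:ℤ)+1))| ≤ (k:ℤ)+1 := by rw [abs_neg, abs_of_nonneg] <;> omega
    have hout : s(u, u') ∉ boxEdges d k := by
      intro hmem
      have := hmem.2 u' (Sym2.mem_mk_right u u') i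
      rw [hu', Function.update_self, abs_neg, abs_of_nonneg] at this <;> omega
    have hb' : ∀ x, |u' x| ≤ (k:ℤ)+1 := by
      intro x
      by_cases hx : x = i
      · subst hx; rw [hu', Function.update_self]; exact hcb
      · rw [hu', Function.update_of_ne hx]; exact hb1 x
    obtain ⟨γ', hγ'⟩ := srcPair_to_hub_neg d k i j hj _ u' rfl hb'
      (by rw [hu', Function.update_self])
    exact ⟨_, srcPair_trans (srcPair_step habs hb1 hcb hout) hγ'⟩

/-! ### Sources: location, parity, and extension of wired configurations -/

lemma srcAt_ne_zero_exists {V : Type*} {E : Set (Sym2 V)} (ω : E → ZMod 2) (v : V)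
    (h : srcAt ω v ≠ 0) : ∃ e : E, ω e = 1 ∧ v ∈ (e : Sym2 V) := by
  by_contra hc
  push_neg at hc
  have : {e : E | ω e = 1 ∧ v ∈ (e : Sym2 V)} = ∅ := by
    ext e
    simp only [Set.mem_setOf_eq, Set.mem_empty_iff_false, iff_false, not_and]
    exact hc e
  rw [srcAt, this] at h
  simp at h

/-- The vertex box `[-m,m]^d` as a finset. -/
def boxV (d m : ℕ) : Finset (Fin d → ℤ) :=
  Fintype.piFinset (fun _ : Fin d => Finset.Icc (-(m:ℤ)) m)

lemma mem_boxV (d m : ℕ) (v : Fin d → ℤ) : v ∈ boxV d m ↔ ∀ i, |v i| ≤ (m:ℤ) := by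
  simp [boxV, Fintype.mem_piFinset, Finset.mem_Icc, abs_le, and_comm]

lemma source_mem_boxV {d m : ℕ} (ω : boxEdges d m → ZMod 2) (v : Fin d → ℤ)
    (h : srcAt ω v ≠ 0) : v ∈ boxV d m := by
  obtain ⟨e, _, hv⟩ := srcAt_ne_zero_exists ω v h
  exact (mem_boxV d m v).mpr (e.2.2 v hv)

lemma adj_abs_le {d : ℕ} {a b : Fin d → ℤ} (h : (latticeGraph d).Adj a b) (i : Fin d) :
    |a i - b i| ≤ 1 := by
  have hsum : (∑ j, |a j - b j|) = 1 := h
  calc |a i - b i| ≤ ∑ j, |a j - b j| :=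
        Finset.single_le_sum (f := fun j => |a j - b j|)
          (fun j _ => abs_nonneg _) (Finset.mem_univ i)
    _ = 1 := hsum

lemma two_endpoints {d m : ℕ} (e : Sym2 (Fin d → ℤ)) (he : e ∈ boxEdges d m) :
    ((boxV d m).filter (fun v => v ∈ e)).card = 2 := by
  induction e with
  | _ a b =>
    have hadj : (latticeGraph d).Adj a b := (SimpleGraph.mem_edgeSet _).mp he.1
    have hab : a ≠ b := hadj.ne
    have ha : a ∈ boxV d m := (mem_boxV d m a).mpr (he.2 a (Sym2.mem_mk_left a b))
    have hb : b ∈ boxV d m := (mem_boxV d m b).mpr (he.2 b (Sym2.mem_mk_right a b))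
    have : (boxV d m).filter (fun v => v ∈ s(a,b)) = {a, b} := by
      ext v
      simp only [Finset.mem_filter, Sym2.mem_iff, Finset.mem_insert, Finset.mem_singleton]
      constructor
      · rintro ⟨_, h⟩; exact h
      · rintro (rfl | rfl)
        · exact ⟨ha, Or.inl rfl⟩
        · exact ⟨hb, Or.inr rfl⟩
    rw [this, Finset.card_insert_of_notMem (by simpa using hab), Finset.card_singleton]

lemma handshake (d m : ℕ) (ω : boxEdges d m → ZMod 2) :
    (∑ v ∈ boxV d m, srcAt ω v) = 0 := by
  have := Fintype.ofFinite (boxEdges d m)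
  have h1 : (∑ v ∈ boxV d m, srcAt ω v)
      = ∑ v ∈ boxV d m, ∑ e : boxEdges d m, if v ∈ (e : Sym2 (Fin d → ℤ)) then ω e else 0 :=
    Finset.sum_congr rfl fun v _ => srcAt_sum' ω v
  rw [h1, Finset.sum_comm]
  refine Finset.sum_eq_zero fun e _ => ?_
  have hcard := two_endpoints (e : Sym2 (Fin d → ℤ)) e.2
  rw [← Finset.sum_filter, Finset.sum_const, hcard]
  show (2 : ℕ) • ω e = 0
  rcases zmod2_cases (ω e) with h | h <;> rw [h] <;> decide

/-- The set of sources of a configuration, as a finset; it has even cardinality. -/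
lemma sources_even (d m : ℕ) (ω : boxEdges d m → ZMod 2) :
    Even ((boxV d m).filter (fun v => srcAt ω v = 1)).card := by
  have hsum := handshake d m ω
  have hsplit : (∑ v ∈ boxV d m, srcAt ω v)
      = ∑ v ∈ (boxV d m).filter (fun v => srcAt ω v = 1), srcAt ω v := by
    rw [Finset.sum_filter_of_ne]
    intro v _ hne
    rcases zmod2_cases (srcAt ω v) with h | h
    · exact absurd h hne
    · exact h
  have hone : (∑ v ∈ (boxV d m).filter (fun v => srcAt ω v = 1), srcAt ω v)
      = (((boxV d m).filter (fun v => srcAt ω v = 1)).card : ZMod 2) := by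
    rw [Finset.sum_congr rfl (fun v hv => (Finset.mem_filter.mp hv).2), Finset.sum_const]
    simp [nsmul_eq_mul]
  rw [hsplit, hone] at hsum
  have := (ZMod.natCast_eq_zero_iff _ 2).mp hsum
  exact even_iff_two_dvd.mpr this

/-- Extension of a configuration by zero to a larger edge set. -/
def extendConf {V : Type*} {E' E : Set (Sym2 V)} (h : E' ⊆ E) (ω' : E' → ZMod 2) :
    E → ZMod 2 := fun e => if he : (e : Sym2 V) ∈ E' then ω' ⟨e, he⟩ else 0

lemma restrict_extend {V : Type*} {E' E : Set (Sym2 V)} (h : E' ⊆ E) (ω' : E' → ZMod 2) :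
    restrictConf h (extendConf h ω') = ω' := by
  funext e
  simp [restrictConf, extendConf, e.2]

lemma srcAt_extend {V : Type*} {E' E : Set (Sym2 V)} (h : E' ⊆ E) (ω' : E' → ZMod 2)
    (v : V) : srcAt (extendConf h ω') v = srcAt ω' v := by
  rw [← srcAt_restrict h (extendConf h ω') v, restrict_extend]
  intro e he _
  by_contra hne
  simp [extendConf, hne] at he

/-- The source-at-`v` additive monoid hom. -/
def srcHom {V : Type*} (E : Set (Sym2 V)) [Finite E] (v : V) : (E → ZMod 2) →+ ZMod 2 where
  toFun ω := srcAt ω v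
  map_zero' := srcAt_zero v
  map_add' ω γ := srcAt_add ω γ v

/-- Every wired even configuration on `Λ_k` extends to an even configuration on `Λ_{k+1}`. -/
lemma wired_extends (d k : ℕ) (hd : 2 ≤ d) (ω' : boxEdges d k → ZMod 2)
    (hω' : ω' ∈ wiredEvens d k) :
    ∃ ω : boxEdges d (k+1) → ZMod 2, IsEvenConf ω ∧
      restrictConf (boxEdges_mono d k) ω = ω' := by
  classical
  set h := boxEdges_mono d k
  set S : Finset (Fin d → ℤ) := (boxV d k).filter (fun v => srcAt ω' v = 1) with hS
  have hmemS : ∀ v, v ∈ S ↔ srcAt ω' v = 1 := by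
    intro v
    simp only [hS, Finset.mem_filter, and_iff_right_iff_imp]
    intro hv
    exact source_mem_boxV ω' v (by rw [hv]; decide)
  have hchoice : ∀ u ∈ S, ∃ γ, SrcPair d k γ u (hubV d k) := by
    intro u hu
    have h1 := (hω' u ((hmemS u).mp hu)).1
    have h2 := (hω' u ((hmemS u).mp hu)).2
    exact srcPair_to_hub d k hd u h1 h2
  choose γf hγf using hchoice
  set γ : boxEdges d (k+1) → ZMod 2 := ∑ u ∈ S.attach, γf u.1 u.2 with hγ
  refine ⟨extendConf h ω' + γ, ?_, ?_⟩
  · intro v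
    rw [srcAt_add, srcAt_extend]
    have hγv : srcAt γ v = ∑ u ∈ S.attach, srcAt (γf u.1 u.2) v := by
      rw [hγ]
      exact map_sum (srcHom (boxEdges d (k+1)) v) _ _
    have hterm : ∀ u : {x // x ∈ S}, srcAt (γf u.1 u.2) v
        = (if v = u.1 then 1 else 0) + (if v = hubV d k then 1 else 0) :=
      fun u => (hγf u.1 u.2).2 v
    rw [hγv, Finset.sum_congr rfl (fun u _ => hterm u), Finset.sum_add_distrib]
    have hsum1 : (∑ u ∈ S.attach, if v = u.1 then (1:ZMod 2) else 0)
        = if v ∈ S then 1 else 0 := by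
      rw [Finset.sum_attach S (fun u => if v = u then (1:ZMod 2) else 0)]
      exact Finset.sum_ite_eq S v (fun _ => (1:ZMod 2))
    have hsum2 : (∑ _u ∈ S.attach, if v = hubV d k then (1:ZMod 2) else 0) = 0 := by
      rw [Finset.sum_const, Finset.card_attach]
      obtain ⟨c, hc⟩ := sources_even d k ω'
      have htwo : ∀ x : ZMod 2, (2:ℕ) • x = 0 := by decide
      rw [show S.card = c * 2 from by rw [← hS] at hc; omega, mul_nsmul, htwo]
    rw [hsum1, hsum2, add_zero]
    by_cases hv : v ∈ S
    · rw [if_pos hv, (hmemS v).mp hv]; decide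
    · rw [if_neg hv]
      rcases zmod2_cases (srcAt ω' v) with h0 | h1
      · rw [h0]; decide
      · exact absurd ((hmemS v).mpr h1) hv
  · funext e
    show (extendConf h ω' + γ) ⟨e.1, h e.2⟩ = ω' e
    rw [Pi.add_apply]
    have h1 : extendConf h ω' ⟨e.1, h e.2⟩ = ω' e := by
      simp [extendConf, e.2]
    have h2 : γ ⟨e.1, h e.2⟩ = 0 := by
      rw [hγ, Finset.sum_apply]
      refine Finset.sum_eq_zero fun u _ => ?_
      exact (hγf u.1 u.2).1 ⟨e.1, h e.2⟩ e.2
    rw [h1, h2, add_zero]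

/-! ### Identification of the image of the restriction map -/

lemma edge_in_smaller_box {d k : ℕ} {e : Sym2 (Fin d → ℤ)} (he : e ∈ boxEdges d (k+1))
    {v : Fin d → ℤ} (hv : v ∈ e) (hvb : ∀ i, |v i| < (k:ℤ)) : e ∈ boxEdges d k := by
  induction e with
  | _ a b =>
    have hadj : (latticeGraph d).Adj a b := (SimpleGraph.mem_edgeSet _).mp he.1
    refine ⟨he.1, ?_⟩
    have key : ∀ w ∈ s(a,b), ∀ x ∈ s(a,b), ∀ i, |w i| < (k:ℤ) → |x i| ≤ (k:ℤ) := by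
      intro w hw x hx i hwi
      rcases Sym2.mem_iff.mp hw with rfl | rfl <;> rcases Sym2.mem_iff.mp hx with rfl | rfl
      · omega
      · have := adj_abs_le hadj i
        have h1 := abs_sub_abs_le_abs_sub (x i) (w i)
        rw [abs_sub_comm] at this
        omega
      · have := adj_abs_le hadj i
        have h1 := abs_sub_abs_le_abs_sub (x i) (w i)
        omega
      · omega
    intro x hx i
    exact key v hv x hx i (hvb i)

lemma restrict_source_boundary (d k : ℕ) (ω : boxEdges d (k+1) → ZMod 2) (v : Fin d → ℤ)
    (hsrc : srcAt (restrictConf (boxEdges_mono d k) ω) v = 1) :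
    (∀ i, |v i| ≤ (k:ℤ)) ∧ ((∃ i, |v i| = (k:ℤ)) ∨ srcAt ω v = 1) := by
  set ω' := restrictConf (boxEdges_mono d k) ω with hω'
  have hb : ∀ i, |v i| ≤ (k:ℤ) :=
    (mem_boxV d k v).mp (source_mem_boxV ω' v (by rw [hsrc]; decide))
  refine ⟨hb, ?_⟩
  by_cases hex : ∃ i, |v i| = (k:ℤ)
  · exact Or.inl hex
  · push_neg at hex
    have hvb : ∀ i, |v i| < (k:ℤ) := fun i => lt_of_le_of_ne (hb i) (hex i)
    refine Or.inr ?_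
    rw [← hsrc, hω', srcAt_restrict]
    intro e _ hv
    exact edge_in_smaller_box e.2 hv hvb

lemma evens_subset_wired (d m : ℕ) :
    {ω : boxEdges d m → ZMod 2 | IsEvenConf ω} ⊆ wiredEvens d m := by
  intro ω hω v hv
  rw [hω v] at hv
  exact absurd hv (by decide)

lemma image_evens (d k : ℕ) (hd : 2 ≤ d) :
    restrictConf (boxEdges_mono d k) '' {ω : boxEdges d (k+1) → ZMod 2 | IsEvenConf ω}
      = wiredEvens d k := by
  apply subset_antisymm
  · rintro ω' ⟨ω, hω, rfl⟩
    intro v hv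
    obtain ⟨hb, hor⟩ := restrict_source_boundary d k ω v hv
    refine ⟨hb, ?_⟩
    rcases hor with hex | hone
    · exact hex
    · rw [hω v] at hone
      exact absurd hone (by decide)
  · intro ω' hω'
    obtain ⟨ω, hω, hres⟩ := wired_extends d k hd ω' hω'
    exact ⟨ω, hω, hres⟩

lemma image_wired (d k : ℕ) (hd : 2 ≤ d) :
    restrictConf (boxEdges_mono d k) '' wiredEvens d (k+1) = wiredEvens d k := by
  apply subset_antisymm
  · rintro ω' ⟨ω, hω, rfl⟩
    intro v hv
    obtain ⟨hb, hor⟩ := restrict_source_boundary d k ω v hv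
    refine ⟨hb, ?_⟩
    rcases hor with hex | hone
    · exact hex
    · obtain ⟨i, hi⟩ := (hω v hone).2
      have := hb i
      rw [hi] at this
      exfalso
      push_cast at this
      omega
  · rw [← image_evens d k hd]
    exact Set.image_mono (evens_subset_wired d (k+1))

/-! ### Uniform measures and pushforwards -/

lemma uniformOn_apply {α : Type*} [Finite α] [MeasurableSpace α]
    (hma : ∀ s : Set α, MeasurableSet s) (S A : Set α) :
    uniformOn S A = ((S.ncard : ENNReal))⁻¹ * ((S ∩ A).ncard : ENNReal) := by
  classical
  have := Fintype.ofFinite α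
  rw [uniformOn, Measure.smul_apply, Measure.sum_apply _ (hma A)]
  have hd : ∀ s : S, Measure.dirac (s : α) A = if (s:α) ∈ A then (1:ENNReal) else 0 := by
    intro s
    rw [Measure.dirac_apply' _ (hma A)]
    by_cases h : (s:α) ∈ A <;> simp [h]
  rw [tsum_congr hd, tsum_fintype]
  have : (∑ s : S, if (s:α) ∈ A then (1:ENNReal) else 0)
      = ((S ∩ A).ncard : ENNReal) := by
    rw [Finset.sum_set_coe (f := fun x => if x ∈ A then (1:ENNReal) else 0)]
    rw [Finset.sum_boole]
    rw [Set.ncard_eq_toFinset_card' (S ∩ A), Set.toFinset_inter,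
      ← Finset.filter_mem_eq_inter]
    simp
  rw [this]
  rfl

lemma map_uniformOn {α β : Type*} [Finite α] [Finite β]
    [MeasurableSpace α] [MeasurableSpace β]
    (hma : ∀ s : Set α, MeasurableSet s) (hmb : ∀ s : Set β, MeasurableSet s)
    (φ : α → β) (S : Set α) (n : ℕ) (hn : 0 < n)
    (hfib : ∀ b ∈ φ '' S, (S ∩ φ ⁻¹' {b}).ncard = n) :
    Measure.map φ (uniformOn S) = uniformOn (φ '' S) := by
  classical
  have := Fintype.ofFinite α
  have := Fintype.ofFinite β
  have hφ : Measurable φ := fun s _ => hma _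
  -- counting identities
  have hcount : ∀ t : Set β, (S ∩ φ ⁻¹' t).ncard = n * ((φ '' S) ∩ t).ncard := by
    intro t
    rw [Set.ncard_eq_toFinset_card' (S ∩ φ ⁻¹' t), Set.toFinset_inter,
      Set.ncard_eq_toFinset_card' ((φ '' S) ∩ t), Set.toFinset_inter]
    rw [show S.toFinset ∩ (φ ⁻¹' t).toFinset
        = (S.toFinset.filter (fun a => φ a ∈ t)) from by
      ext a; simp [Set.mem_toFinset]]
    have hmapsto : ∀ a ∈ S.toFinset.filter (fun a => φ a ∈ t),
        φ a ∈ (φ '' S).toFinset ∩ t.toFinset := by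
      intro a ha
      rw [Finset.mem_filter, Set.mem_toFinset] at ha
      rw [Finset.mem_inter, Set.mem_toFinset, Set.mem_toFinset]
      exact ⟨⟨a, ha.1, rfl⟩, ha.2⟩
    rw [Finset.card_eq_sum_card_fiberwise hmapsto]
    have key : ∀ b ∈ (φ '' S).toFinset ∩ t.toFinset,
        ((S.toFinset.filter (fun a => φ a ∈ t)).filter (fun a => φ a = b)).card = n := by
      intro b hb
      rw [Finset.mem_inter, Set.mem_toFinset, Set.mem_toFinset] at hb
      rw [← hfib b hb.1, Set.ncard_eq_toFinset_card' (S ∩ φ ⁻¹' {b}), Set.toFinset_inter]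
      congr 1
      ext a
      rw [Finset.mem_filter, Finset.mem_filter, Finset.mem_inter,
        Set.mem_toFinset, Set.mem_toFinset, Set.mem_preimage, Set.mem_singleton_iff]
      constructor
      · rintro ⟨⟨h1, _⟩, h3⟩
        exact ⟨h1, h3⟩
      · rintro ⟨h1, h2⟩
        exact ⟨⟨h1, h2 ▸ hb.2⟩, h2⟩
    rw [Finset.sum_congr rfl key, Finset.sum_const, smul_eq_mul, mul_comm]
  have hScard : S.ncard = n * (φ '' S).ncard := by
    have := hcount Set.univ
    simpa using this
  refine Measure.ext fun t ht => ?_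
  rw [Measure.map_apply hφ ht, uniformOn_apply hma, uniformOn_apply hmb,
    hcount t, hScard]
  set M := (φ '' S).ncard
  set m := ((φ '' S) ∩ t).ncard
  by_cases hM : M = 0
  · have hm : m = 0 := by
      have hle : m ≤ M := Set.ncard_le_ncard Set.inter_subset_left (Set.toFinite _)
      omega
    rw [hM, hm]
    simp
  · push_cast
    rw [ENNReal.mul_inv (Or.inl (by exact_mod_cast Nat.cast_ne_zero.mpr hn.ne'))
      (Or.inl (ENNReal.natCast_ne_top n))]
    rw [show ((n:ENNReal))⁻¹ * ((M:ENNReal))⁻¹ * ((n:ENNReal) * (m:ENNReal))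
        = ((n:ENNReal)⁻¹ * (n:ENNReal)) * (((M:ENNReal))⁻¹ * (m:ENNReal)) from by ring]
    rw [ENNReal.inv_mul_cancel (by exact_mod_cast Nat.cast_ne_zero.mpr hn.ne')
      (ENNReal.natCast_ne_top n), one_mul]

lemma fiber_ncard_const {α β : Type*} [AddCommGroup α] [AddCommGroup β]
    (φ : α → β) (hφadd : ∀ a b, φ (a + b) = φ a + φ b)
    (hchar : ∀ a : α, a + a = 0) (hcharβ : ∀ b : β, b + b = 0)
    (S : Set α) (hadd : ∀ a ∈ S, ∀ b ∈ S, a + b ∈ S) :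
    ∀ b ∈ φ '' S, (S ∩ φ ⁻¹' {b}).ncard = (S ∩ φ ⁻¹' {0}).ncard := by
  have hφ0 : φ 0 = 0 := by
    have h := hφadd 0 0
    rw [add_zero] at h
    exact (right_eq_add.mp h)
  rintro b ⟨s₀, hs₀, rfl⟩
  have himg : S ∩ φ ⁻¹' {φ s₀} = (· + s₀) '' (S ∩ φ ⁻¹' {0}) := by
    ext y
    constructor
    · rintro ⟨hyS, hyφ⟩
      rw [Set.mem_preimage, Set.mem_singleton_iff] at hyφ
      refine ⟨y + s₀, ⟨hadd y hyS s₀ hs₀, ?_⟩, ?_⟩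
      · rw [Set.mem_preimage, Set.mem_singleton_iff, hφadd, hyφ, hcharβ]
      · show y + s₀ + s₀ = y
        rw [add_assoc, hchar, add_zero]
    · rintro ⟨x, ⟨hxS, hxφ⟩, rfl⟩
      rw [Set.mem_preimage, Set.mem_singleton_iff] at hxφ
      refine ⟨hadd x hxS s₀ hs₀, ?_⟩
      rw [Set.mem_preimage, Set.mem_singleton_iff, hφadd, hxφ, zero_add]
  rw [himg, Set.ncard_image_of_injective _ (add_left_injective s₀)]

lemma zmod2_fun_add_self {E : Type*} (a : E → ZMod 2) : a + a = 0 := by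
  funext e
  show a e + a e = 0
  rcases zmod2_cases (a e) with h | h <;> rw [h] <;> decide

lemma zmod2_add_eq_one {a b : ZMod 2} (h : a + b = 1) : a = 1 ∨ b = 1 := by
  revert h; revert a b; decide

lemma wiredEvens_zero_mem (d m : ℕ) : (0 : boxEdges d m → ZMod 2) ∈ wiredEvens d m := by
  intro v hv
  rw [srcAt_zero] at hv
  exact absurd hv (by decide)

lemma wiredEvens_add_mem (d m : ℕ) :
    ∀ a ∈ wiredEvens d m, ∀ b ∈ wiredEvens d m, a + b ∈ wiredEvens d m := by
  intro a ha b hb v hv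
  rw [srcAt_add] at hv
  rcases zmod2_add_eq_one hv with h | h
  · exact ha v h
  · exact hb v h

lemma evens_zero_mem (d m : ℕ) :
    (0 : boxEdges d m → ZMod 2) ∈ {ω : boxEdges d m → ZMod 2 | IsEvenConf ω} :=
  fun v => srcAt_zero v

lemma evens_add_mem (d m : ℕ) :
    ∀ a ∈ {ω : boxEdges d m → ZMod 2 | IsEvenConf ω},
    ∀ b ∈ {ω : boxEdges d m → ZMod 2 | IsEvenConf ω},
      a + b ∈ {ω : boxEdges d m → ZMod 2 | IsEvenConf ω} := by
  intro a ha b hb v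
  rw [srcAt_add, ha v, hb v, add_zero]

lemma map_uniformOn_conf (d k : ℕ) (S : Set (boxEdges d (k+1) → ZMod 2))
    (h0 : 0 ∈ S) (hadd : ∀ a ∈ S, ∀ b ∈ S, a + b ∈ S) :
    Measure.map (restrictConf (boxEdges_mono d k)) (uniformOn S)
      = uniformOn (restrictConf (boxEdges_mono d k) '' S) := by
  set φ := restrictConf (boxEdges_mono d k)
  have hφadd : ∀ a b, φ (a + b) = φ a + φ b := fun a b => rfl
  refine map_uniformOn (fun s => s.toFinite.measurableSet)
    (fun s => s.toFinite.measurableSet) φ S ((S ∩ φ ⁻¹' {0}).ncard) ?_ ?_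
  · rw [Set.ncard_pos (Set.toFinite _)]
    exact ⟨0, h0, by rw [Set.mem_preimage, Set.mem_singleton_iff]; rfl⟩
  · exact fiber_ncard_const φ hφadd (fun a => zmod2_fun_add_self a)
      (fun b => zmod2_fun_add_self b) S hadd
theorem marginal_of_ueg_on_box (d k : ℕ) (hd : 2 ≤ d) (hk : 1 ≤ k) :
    Measure.map (restrictConf (boxEdges_mono d k))
        (uniformOn {ω : boxEdges d (k + 1) → ZMod 2 | IsEvenConf ω})
      = Measure.map (restrictConf (boxEdges_mono d k)) (uniformOn (wiredEvens d (k + 1)))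
    ∧ Measure.map (restrictConf (boxEdges_mono d k)) (uniformOn (wiredEvens d (k + 1)))
      = uniformOn (wiredEvens d k) := by
  have h1 : Measure.map (restrictConf (boxEdges_mono d k))
      (uniformOn {ω : boxEdges d (k + 1) → ZMod 2 | IsEvenConf ω})
      = uniformOn (wiredEvens d k) := by
    rw [map_uniformOn_conf d k _ (evens_zero_mem d (k+1)) (evens_add_mem d (k+1)),
      image_evens d k hd]
  have h2 : Measure.map (restrictConf (boxEdges_mono d k))
      (uniformOn (wiredEvens d (k + 1))) = uniformOn (wiredEvens d k) := by
    rw [map_uniformOn_conf d k _ (wiredEvens_zero_mem d (k+1)) (wiredEvens_add_mem d (k+1)),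
      image_wired d k hd]
  exact ⟨h1.trans h2.symm, h2⟩
end
end

section
/- Let 𝔾=(𝕍,𝔼) be a locally finite, connected, countably infinite graph and E ⊆ 𝔼. A configuration ω ∈ (ZMod 2)^E is the restriction to E of some even configuration of 𝔾 if and only if: (i) ∂ω(v) = 0 for every vertex v incident to no edge of 𝔼∖E; and (ii) for every finite connected component C of the graph with edge set 𝔼∖E and isolated vertices removed, the number of vertices v of C with ∂ω(v) = 1 is even. Moreover, the set Ω^ξ_∅ of configurations satisfying (i) and (ii) is a closed subgroup of (ZMod 2)^E, and the pushforward of UEG_𝔾 under restriction to E equals the Haar probability measure on Ω^ξ_∅. -/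
open MeasureTheory

noncomputable section

instance : TopologicalSpace (ZMod 2) := ⊥

/-- The graph with edge set `𝔼 ∖ E`. -/
def fringeGraph {V : Type*} (G : SimpleGraph V) (E : Set (Sym2 V)) : SimpleGraph V :=
  SimpleGraph.fromEdgeSet (G.edgeSet \ E)

/-- The set `Ω^ξ_∅` of configurations on `E` satisfying the two boundary conditions:
(i) vertices incident to no edge of `𝔼 ∖ E` are sourceless; (ii) every finite connected
component of the graph with edge set `𝔼 ∖ E` (isolated vertices removed) carries an even
number of sources. -/
def bdryEvens {V : Type*} (G : SimpleGraph V) (E : Set (Sym2 V)) :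
    Set (E → ZMod 2) :=
  {ω | (∀ v : V, (∀ e ∈ G.edgeSet \ E, v ∉ e) → srcAt ω v = 0) ∧
    (∀ v : V, (∃ e ∈ G.edgeSet \ E, v ∈ e) →
      {w : V | (fringeGraph G E).Reachable v w}.Finite →
      Even (Set.ncard {w : V | (fringeGraph G E).Reachable v w ∧ srcAt ω w = 1}))}


-- ===================== auxiliary material =====================

instance : DiscreteTopology (ZMod 2) := ⟨rfl⟩
instance : BorelSpace (ZMod 2) := ⟨borel_eq_top_of_discrete.symm⟩
instance : IsTopologicalAddGroup (ZMod 2) :=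
  { continuous_add := continuous_of_discreteTopology
    continuous_neg := continuous_of_discreteTopology }

namespace UEGAux
variable {V : Type*} {E : Set (Sym2 V)}


lemma zmod2_eq_ite (x : ZMod 2) : x = if x = 1 then 1 else 0 := by
  revert x; decide

lemma zmod2_add_self (x : ZMod 2) : x + x = 0 := by revert x; decide

lemma zmod2_neg (x : ZMod 2) : -x = x := by revert x; decide

lemma sum_zmod2 {α : Type*} (s : Finset α) (g : α → ZMod 2) :
    ∑ a ∈ s, g a = ((s.filter (fun a => g a = 1)).card : ZMod 2) := by
  classical
  rw [← Finset.sum_boole]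
  exact Finset.sum_congr rfl fun a _ => zmod2_eq_ite (g a)

lemma srcAt_eq_sum {ω : E → ZMod 2} {v : V}
    (hv : {e : E | v ∈ (e : Sym2 V)}.Finite) :
    srcAt ω v = ∑ e ∈ hv.toFinset, ω e := by
  classical
  rw [sum_zmod2, srcAt]
  congr 2
  rw [← Set.ncard_coe_finset]
  congr 1
  ext e
  simp [Set.Finite.mem_toFinset, and_comm]

lemma srcAt_add {ω ω' : E → ZMod 2} {v : V}
    (hv : {e : E | v ∈ (e : Sym2 V)}.Finite) :
    srcAt (ω + ω') v = srcAt ω v + srcAt ω' v := by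
  rw [srcAt_eq_sum hv, srcAt_eq_sum hv, srcAt_eq_sum hv, ← Finset.sum_add_distrib]
  rfl

lemma srcAt_zero (v : V) : srcAt (0 : E → ZMod 2) v = 0 := by
  have : {e : E | (0 : E → ZMod 2) e = 1 ∧ v ∈ (e : Sym2 V)} = ∅ := by
    ext e; simp
  rw [srcAt, this]; simp

lemma continuous_srcAt {v : V} (hv : {e : E | v ∈ (e : Sym2 V)}.Finite) :
    Continuous (fun ω : E → ZMod 2 => srcAt ω v) := by
  have h : (fun ω : E → ZMod 2 => srcAt ω v)
      = fun ω => ∑ e ∈ hv.toFinset, ω e := by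
    funext ω; exact srcAt_eq_sum hv
  rw [h]
  exact continuous_finset_sum _ fun e _ => continuous_apply e

open Classical in
lemma srcAt_single (e₀ : E) (v : V) [DecidableEq E] :
    srcAt (Function.update (0 : E → ZMod 2) e₀ 1) v
      = if v ∈ (e₀ : Sym2 V) then 1 else 0 := by
  classical
  have hset : {e : E | Function.update (0 : E → ZMod 2) e₀ 1 e = 1 ∧ v ∈ (e : Sym2 V)}
      = if v ∈ (e₀ : Sym2 V) then {e₀} else ∅ := by
    split_ifs with h
    · ext e
      simp only [Set.mem_setOf_eq, Set.mem_singleton_iff, Function.update_apply]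
      constructor
      · rintro ⟨h1, -⟩
        by_contra hne
        rw [if_neg hne] at h1
        exact one_ne_zero h1.symm
      · rintro rfl; simp [h]
    · ext e
      simp only [Set.mem_setOf_eq, Set.mem_empty_iff_false, iff_false, not_and,
        Function.update_apply]
      intro h1
      by_cases he : e = e₀
      · subst he; exact h
      · rw [if_neg he] at h1; exact absurd h1.symm one_ne_zero
  rw [srcAt, hset]
  split_ifs <;> simp

lemma subtype_incident_finite {A B : Set (Sym2 V)} (hA : A ⊆ B)
    (hB : ∀ v : V, {e : Sym2 V | e ∈ B ∧ v ∈ e}.Finite) (v : V) :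
    {e : A | v ∈ (e : Sym2 V)}.Finite := by
  have hpre : ((fun e : A => (e : Sym2 V)) ⁻¹' {e : Sym2 V | e ∈ B ∧ v ∈ e}).Finite :=
    Set.Finite.preimage (Subtype.val_injective.injOn) (hB v)
  exact hpre.subset (fun e he => ⟨hA e.2, he⟩)

lemma srcAt_restrict {A B : Set (Sym2 V)} (hA : A ⊆ B) (η : B → ZMod 2) (v : V) :
    srcAt (restrictConf hA η) v
      = (Set.ncard {e : B | η e = 1 ∧ v ∈ (e : Sym2 V) ∧ (e : Sym2 V) ∈ A} : ZMod 2) := by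
  have himg : {e : B | η e = 1 ∧ v ∈ (e : Sym2 V) ∧ (e : Sym2 V) ∈ A}
      = Set.inclusion hA '' {e : A | restrictConf hA η e = 1 ∧ v ∈ (e : Sym2 V)} := by
    ext ⟨x, hx⟩
    constructor
    · rintro ⟨h1, h2, h3⟩
      exact ⟨⟨x, h3⟩, ⟨h1, h2⟩, rfl⟩
    · rintro ⟨⟨y, hy⟩, ⟨h1, h2⟩, heq⟩
      obtain rfl : y = x := congrArg Subtype.val heq
      exact ⟨h1, h2, hy⟩
  have hcard : {e : A | restrictConf hA η e = 1 ∧ v ∈ (e : Sym2 V)}.ncard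
      = {e : B | η e = 1 ∧ v ∈ (e : Sym2 V) ∧ (e : Sym2 V) ∈ A}.ncard := by
    rw [himg, Set.ncard_image_of_injective _ (Set.inclusion_injective hA)]
  exact congrArg Nat.cast hcard

lemma srcAt_split {A B : Set (Sym2 V)} (hA : A ⊆ B)
    (hB : ∀ v : V, {e : Sym2 V | e ∈ B ∧ v ∈ e}.Finite) (η : B → ZMod 2) (v : V) :
    srcAt η v = srcAt (restrictConf hA η) v
      + srcAt (restrictConf (Set.diff_subset (s := B) (t := A)) η) v := by
  classical
  rw [srcAt_restrict, srcAt_restrict]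
  have hincfin : {e : B | v ∈ (e : Sym2 V)}.Finite :=
    subtype_incident_finite (le_refl B) hB v
  set S : Set B := {e : B | η e = 1 ∧ v ∈ (e : Sym2 V)} with hS
  set S1 : Set B := {e : B | η e = 1 ∧ v ∈ (e : Sym2 V) ∧ (e : Sym2 V) ∈ A} with hS1
  set S2 : Set B := {e : B | η e = 1 ∧ v ∈ (e : Sym2 V) ∧ (e : Sym2 V) ∈ B \ A} with hS2
  have hunion : S = S1 ∪ S2 := by
    ext e
    simp only [hS, hS1, hS2, Set.mem_setOf_eq, Set.mem_union, Set.mem_diff]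
    constructor
    · rintro ⟨h1, h2⟩
      by_cases hmem : (e : Sym2 V) ∈ A
      · exact Or.inl ⟨h1, h2, hmem⟩
      · exact Or.inr ⟨h1, h2, e.2, hmem⟩
    · rintro (⟨h1, h2, -⟩ | ⟨h1, h2, -⟩) <;> exact ⟨h1, h2⟩
  have hdisj : Disjoint S1 S2 := by
    rw [Set.disjoint_left]
    rintro e ⟨-, -, h1⟩ ⟨-, -, h2⟩
    exact h2.2 h1
  have hfin1 : S1.Finite := hincfin.subset (fun e he => he.2.1)
  have hfin2 : S2.Finite := hincfin.subset (fun e he => he.2.1)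
  rw [srcAt, show {e : B | η e = 1 ∧ v ∈ (e : Sym2 V)} = S1 ∪ S2 from hunion,
    Set.ncard_union_eq hdisj hfin1 hfin2]
  push_cast
  rfl


variable {D : Set (Sym2 V)}


open Classical in
lemma exists_conf_pair (hD : ∀ v : V, {e : D | v ∈ (e : Sym2 V)}.Finite) {u v : V}
    (h : (SimpleGraph.fromEdgeSet D).Reachable u v) :
    ∃ ζ : D → ZMod 2, ∀ w, srcAt ζ w
      = (if w = u then 1 else 0) + (if w = v then 1 else 0) := by
  classical
  obtain ⟨p⟩ := h
  induction p with
  | nil =>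
    exact ⟨0, fun w => by rw [srcAt_zero]; split_ifs <;> decide⟩
  | @cons u b v hadj p ih =>
    obtain ⟨ζ', hζ'⟩ := ih
    rw [SimpleGraph.fromEdgeSet_adj] at hadj
    obtain ⟨hmem, hne⟩ := hadj
    refine ⟨Function.update (0 : D → ZMod 2) ⟨s(u, b), hmem⟩ 1 + ζ', fun w => ?_⟩
    rw [srcAt_add (hD w), srcAt_single, hζ' w]
    by_cases h1 : w = u <;> by_cases h2 : w = b <;> by_cases h3 : w = v <;>
      simp_all [Sym2.mem_iff] <;> decide

open Classical in
lemma pairable (hD : ∀ v : V, {e : D | v ∈ (e : Sym2 V)}.Finite) :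
    ∀ (n : ℕ) (t : Finset V), t.card ≤ n →
      (∀ a ∈ t, ∀ b ∈ t, (SimpleGraph.fromEdgeSet D).Reachable a b) →
      Even t.card →
      ∃ ζ : D → ZMod 2, ∀ w, srcAt ζ w = if w ∈ t then 1 else 0 := by
  classical
  intro n
  induction n with
  | zero =>
    intro t hcard _ _
    have ht : t = ∅ := Finset.card_eq_zero.mp (Nat.le_zero.mp hcard)
    subst ht
    exact ⟨0, fun w => by simp [srcAt_zero]⟩
  | succ n IH =>
    intro t hcard hpair heven
    rcases t.eq_empty_or_nonempty with rfl | ⟨a, ha⟩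
    · exact ⟨0, fun w => by simp [srcAt_zero]⟩
    · have hne0 : t.card ≠ 0 := by
        simp only [ne_eq, Finset.card_eq_zero]
        exact Finset.nonempty_iff_ne_empty.mp ⟨a, ha⟩
      have h2le : 2 ≤ t.card := by
        rcases heven with ⟨k, hk⟩; omega
      have hbne : (t.erase a).Nonempty := by
        rw [← Finset.card_pos, Finset.card_erase_of_mem ha]; omega
      obtain ⟨b, hb⟩ := hbne
      have hba : b ≠ a := Finset.ne_of_mem_erase hb
      have hbt : b ∈ t := Finset.mem_of_mem_erase hb
      set t' := (t.erase a).erase b with ht'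
      have hcard' : t'.card = t.card - 2 := by
        rw [ht', Finset.card_erase_of_mem hb, Finset.card_erase_of_mem ha]; omega
      have ht'card : t'.card ≤ n := by omega
      have ht'even : Even t'.card := by
        rcases heven with ⟨k, hk⟩
        exact ⟨k - 1, by omega⟩
      have ht'sub : t' ⊆ t :=
        subset_trans (Finset.erase_subset _ _) (Finset.erase_subset _ _)
      obtain ⟨ζ', hζ'⟩ := IH t' ht'card
        (fun x hx y hy => hpair x (ht'sub hx) y (ht'sub hy)) ht'even
      obtain ⟨ζ₀, hζ₀⟩ := exists_conf_pair hD (hpair a ha b hbt)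
      refine ⟨ζ₀ + ζ', fun w => ?_⟩
      rw [srcAt_add (hD w), hζ₀ w, hζ' w]
      have hwt' : w ∈ t' ↔ w ≠ b ∧ w ≠ a ∧ w ∈ t := by
        simp [ht', Finset.mem_erase]
      by_cases h1 : w = a <;> by_cases h2 : w = b <;> by_cases h3 : w ∈ t <;>
        simp_all <;> decide




open Classical in
lemma approx_aux (hD : ∀ v : V, {e : D | v ∈ (e : Sym2 V)}.Finite)
    (f : V → ZMod 2)
    (h1 : ∀ v : V, (∀ e ∈ D, v ∉ e) → f v = 0)
    (h2 : ∀ v : V, (∃ e ∈ D, v ∈ e) →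
      {w : V | (SimpleGraph.fromEdgeSet D).Reachable v w}.Finite →
      Even (Set.ncard {w : V | (SimpleGraph.fromEdgeSet D).Reachable v w ∧ f w = 1}))
    (W : Finset V) :
    ∀ (n : ℕ) (T : Finset V), T.card ≤ n →
      (T ⊆ W.filter fun v => f v = 1) →
      (∀ v ∈ T, ∀ w ∈ W, f w = 1 →
        (SimpleGraph.fromEdgeSet D).Reachable v w → w ∈ T) →
      ∃ ζ : D → ZMod 2, ∀ v ∈ W, srcAt ζ v = if v ∈ T then 1 else 0 := by
  classical
  intro n
  induction n with
  | zero =>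
    intro T hcard _ _
    have hT : T = ∅ := Finset.card_eq_zero.mp (Nat.le_zero.mp hcard)
    subst hT
    exact ⟨0, fun v _ => by simp [srcAt_zero]⟩
  | succ n IH =>
    intro T hcard hTW hcl
    rcases T.eq_empty_or_nonempty with rfl | ⟨v₀, hv₀⟩
    · exact ⟨0, fun v _ => by simp [srcAt_zero]⟩
    set t := T.filter (fun w => (SimpleGraph.fromEdgeSet D).Reachable v₀ w) with htdef
    have htsub : t ⊆ T := Finset.filter_subset _ _
    have hv₀t : v₀ ∈ t := Finset.mem_filter.mpr ⟨hv₀, SimpleGraph.Reachable.refl v₀⟩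
    have htW : t ⊆ W := fun x hx => Finset.mem_of_mem_filter x (hTW (htsub hx))
    have htf : ∀ x ∈ t, f x = 1 := fun x hx =>
      (Finset.mem_filter.mp (hTW (htsub hx))).2
    have htreach : ∀ x ∈ t, (SimpleGraph.fromEdgeSet D).Reachable v₀ x :=
      fun x hx => (Finset.mem_filter.mp hx).2
    have htpair : ∀ a ∈ t, ∀ b ∈ t, (SimpleGraph.fromEdgeSet D).Reachable a b :=
      fun a ha b hb => (htreach a ha).symm.trans (htreach b hb)
    set T' := T \ t with hT'def
    have hT'card : T'.card ≤ n := by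
      have h1' : T'.card = T.card - t.card := by
        rw [hT'def, Finset.card_sdiff_of_subset htsub]
      have h2' : 1 ≤ t.card := Finset.card_pos.mpr ⟨v₀, hv₀t⟩
      omega
    have hT'W : T' ⊆ W.filter fun v => f v = 1 :=
      fun x hx => hTW (Finset.mem_sdiff.mp hx).1
    have hT'cl : ∀ v ∈ T', ∀ w ∈ W, f w = 1 →
        (SimpleGraph.fromEdgeSet D).Reachable v w → w ∈ T' := by
      intro v hv w hw hfw hr
      obtain ⟨hvT, hvt⟩ := Finset.mem_sdiff.mp hv
      refine Finset.mem_sdiff.mpr ⟨hcl v hvT w hw hfw hr, ?_⟩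
      intro hwt
      exact hvt (Finset.mem_filter.mpr ⟨hvT, ((htreach w hwt).trans hr.symm)⟩)
    obtain ⟨ζ', hζ'⟩ := IH T' hT'card hT'W hT'cl
    -- produce the chunk configuration for `t`
    have hchunk : ∃ ζt : D → ZMod 2, ∀ v ∈ W, srcAt ζt v = if v ∈ t then 1 else 0 := by
      by_cases hev : Even t.card
      · obtain ⟨ζt, hζt⟩ := pairable hD t.card t le_rfl htpair hev
        exact ⟨ζt, fun v _ => hζt v⟩
      · -- odd chunk: find a partner outside `W`
        have hu : ∃ u : V, (SimpleGraph.fromEdgeSet D).Reachable v₀ u ∧ u ∉ W := by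
          by_contra hno
          push_neg at hno
          have hCW : {w : V | (SimpleGraph.fromEdgeSet D).Reachable v₀ w} ⊆ ↑W :=
            fun w hw => hno w hw
          have hCfin : {w : V | (SimpleGraph.fromEdgeSet D).Reachable v₀ w}.Finite :=
            W.finite_toSet.subset hCW
          have hfv₀ : f v₀ = 1 := (Finset.mem_filter.mp (hTW hv₀)).2
          have hniso : ∃ e ∈ D, v₀ ∈ e := by
            by_contra hiso
            push_neg at hiso
            rw [h1 v₀ hiso] at hfv₀
            exact absurd hfv₀ (by decide)
          have heq : {w : V | (SimpleGraph.fromEdgeSet D).Reachable v₀ w ∧ f w = 1} = ↑t := by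
            ext w
            simp only [Set.mem_setOf_eq, Finset.coe_filter, htdef]
            constructor
            · rintro ⟨hr, hf⟩
              exact ⟨hcl v₀ hv₀ w (hno w hr) hf hr, hr⟩
            · rintro ⟨hwT, hr⟩
              exact ⟨hr, htf w (Finset.mem_filter.mpr ⟨hwT, hr⟩)⟩
          have := h2 v₀ hniso hCfin
          rw [heq, Set.ncard_coe_finset] at this
          exact hev this
        obtain ⟨u, hur, huW⟩ := hu
        have hut : u ∉ t := fun hc => huW (htW hc)
        have hins : ∀ a ∈ insert u t, (SimpleGraph.fromEdgeSet D).Reachable v₀ a := by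
          intro a ha
          rcases Finset.mem_insert.mp ha with rfl | ha'
          · exact hur
          · exact htreach a ha'
        have hinspair : ∀ a ∈ insert u t, ∀ b ∈ insert u t,
            (SimpleGraph.fromEdgeSet D).Reachable a b :=
          fun a ha b hb => (hins a ha).symm.trans (hins b hb)
        have hinseven : Even (insert u t).card := by
          rw [Finset.card_insert_of_notMem hut]
          rcases Nat.even_or_odd t.card with h | h
          · exact absurd h hev
          · exact h.add_one
        obtain ⟨ζt, hζt⟩ := pairable hD _ (insert u t) le_rfl hinspair hinseven
        refine ⟨ζt, fun v hv => ?_⟩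
        rw [hζt v]
        have hvu : v ≠ u := fun hc => huW (hc ▸ hv)
        by_cases hvt : v ∈ t
        · simp [hvt]
        · simp [hvt, Finset.mem_insert, hvu]
    obtain ⟨ζt, hζt⟩ := hchunk
    refine ⟨ζt + ζ', fun v hv => ?_⟩
    rw [srcAt_add (hD v), hζt v hv, hζ' v hv]
    by_cases h1' : v ∈ t
    · have hvT : v ∈ T := htsub h1'
      have hvT' : v ∉ T' := fun hc => (Finset.mem_sdiff.mp hc).2 h1'
      simp [h1', hvT, hvT']
    · by_cases h2' : v ∈ T
      · have hvT' : v ∈ T' := Finset.mem_sdiff.mpr ⟨h2', h1'⟩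
        simp [h1', h2', hvT']
      · have hvT' : v ∉ T' := fun hc => h2' (Finset.mem_sdiff.mp hc).1
        simp [h1', h2', hvT']

open Classical in
lemma key (hD : ∀ v : V, {e : D | v ∈ (e : Sym2 V)}.Finite)
    (f : V → ZMod 2)
    (h1 : ∀ v : V, (∀ e ∈ D, v ∉ e) → f v = 0)
    (h2 : ∀ v : V, (∃ e ∈ D, v ∈ e) →
      {w : V | (SimpleGraph.fromEdgeSet D).Reachable v w}.Finite →
      Even (Set.ncard {w : V | (SimpleGraph.fromEdgeSet D).Reachable v w ∧ f w = 1})) :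
    ∃ ζ : D → ZMod 2, ∀ v, srcAt ζ v = f v := by
  classical
  -- finite approximations
  have happrox : ∀ W : Finset V, ∃ ζ : D → ZMod 2, ∀ v ∈ W, srcAt ζ v = f v := by
    intro W
    obtain ⟨ζ, hζ⟩ := approx_aux hD f h1 h2 W (W.filter fun v => f v = 1).card
      (W.filter fun v => f v = 1) le_rfl (Finset.Subset.refl _)
      (fun v _ w hw hfw _ => Finset.mem_filter.mpr ⟨hw, hfw⟩)
    refine ⟨ζ, fun v hv => ?_⟩
    rw [hζ v hv]
    by_cases hfv : f v = 1
    · rw [if_pos (Finset.mem_filter.mpr ⟨hv, hfv⟩), hfv]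
    · have hnm : v ∉ Finset.filter (fun v => f v = 1) W :=
        fun hc => hfv (Finset.mem_filter.mp hc).2
      rw [if_neg hnm]
      conv_rhs => rw [zmod2_eq_ite (f v)]
      rw [if_neg hfv]
  -- compactness
  set Z : Finset V → Set (D → ZMod 2) :=
    fun W => {ζ | ∀ v ∈ W, srcAt ζ v = f v} with hZ
  have hZclosed : ∀ W, IsClosed (Z W) := by
    intro W
    have : Z W = ⋂ v ∈ W, (fun ζ : D → ZMod 2 => srcAt ζ v) ⁻¹' {f v} := by
      ext ζ; simp [hZ]
    rw [this]
    exact isClosed_biInter fun v _ =>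
      IsClosed.preimage (continuous_srcAt (hD v)) isClosed_singleton
  have hdir : Directed (· ⊇ ·) Z := by
    intro W W'
    refine ⟨W ∪ W', fun ζ hζ v hv => hζ v (Finset.mem_union_left _ hv),
      fun ζ hζ v hv => hζ v (Finset.mem_union_right _ hv)⟩
  have hne : (⋂ W, Z W).Nonempty := by
    apply IsCompact.nonempty_iInter_of_directed_nonempty_isCompact_isClosed Z hdir
    · intro W; exact happrox W
    · intro W; exact (hZclosed W).isCompact
    · exact hZclosed
  obtain ⟨ζ, hζ⟩ := hne
  refine ⟨ζ, fun v => ?_⟩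
  have := Set.mem_iInter.mp hζ {v}
  exact this v (Finset.mem_singleton_self v)



open Classical in
lemma handshake (hD : ∀ v : V, {e : D | v ∈ (e : Sym2 V)}.Finite)
    (hdiag : ∀ e ∈ D, ¬ Sym2.IsDiag e) (ζ : D → ZMod 2) {v₀ : V}
    (hC : {w : V | (SimpleGraph.fromEdgeSet D).Reachable v₀ w}.Finite) :
    Even (Set.ncard {w : V | (SimpleGraph.fromEdgeSet D).Reachable v₀ w ∧ srcAt ζ w = 1}) := by
  classical
  set C : Set V := {w : V | (SimpleGraph.fromEdgeSet D).Reachable v₀ w} with hCdef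
  set Cfin : Finset V := hC.toFinset with hCfin
  -- the finite set of fringe edges incident to the component
  have hFfin : {e : D | ∃ w ∈ C, w ∈ (e : Sym2 V)}.Finite := by
    have : {e : D | ∃ w ∈ C, w ∈ (e : Sym2 V)} ⊆ ⋃ w ∈ C, {e : D | w ∈ (e : Sym2 V)} := by
      rintro e ⟨w, hw, hwe⟩
      exact Set.mem_biUnion hw hwe
    exact (Set.Finite.biUnion hC (fun w _ => hD w)).subset this
  set F : Finset D := hFfin.toFinset with hF
  have hstep1 : ∀ w ∈ Cfin, srcAt ζ w
      = ∑ e ∈ F, if w ∈ (e : Sym2 V) then ζ e else 0 := by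
    intro w hw
    rw [srcAt_eq_sum (hD w), ← Finset.sum_filter]
    congr 1
    ext e
    simp only [hF, Finset.mem_filter, Set.Finite.mem_toFinset, Set.mem_setOf_eq]
    constructor
    · intro h
      exact ⟨⟨w, (Set.Finite.mem_toFinset hC).mp hw, h⟩, h⟩
    · exact fun h => h.2
  have hsum : ∑ w ∈ Cfin, srcAt ζ w = 0 := by
    rw [Finset.sum_congr rfl hstep1, Finset.sum_comm]
    refine Finset.sum_eq_zero fun e he => ?_
    rw [← Finset.sum_filter, Finset.sum_const]
    -- the edge e has exactly two endpoints, both in C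
    obtain ⟨a, b, hab⟩ : ∃ a b : V, (e : Sym2 V) = s(a, b) := by
      refine ⟨(e : Sym2 V).out.1, (e : Sym2 V).out.2, ?_⟩
      exact (Prod.mk.eta (p := (e : Sym2 V).out) ▸ (Quot.out_eq _).symm)
    have hne : a ≠ b := by
      intro h
      exact hdiag (e : Sym2 V) e.2 (hab ▸ Sym2.mk_isDiag_iff.mpr h)
    have hadj : (SimpleGraph.fromEdgeSet D).Adj a b :=
      (SimpleGraph.fromEdgeSet_adj _).mpr ⟨hab ▸ e.2, hne⟩
    obtain ⟨w₀, hw₀C, hw₀e⟩ := (Set.Finite.mem_toFinset hFfin).mp he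
    have haC : a ∈ C ∧ b ∈ C := by
      rw [hab, Sym2.mem_iff] at hw₀e
      rcases hw₀e with rfl | rfl
      · exact ⟨hw₀C, hw₀C.trans hadj.reachable⟩
      · exact ⟨hw₀C.trans hadj.symm.reachable, hw₀C⟩
    have hfilter : Cfin.filter (fun w => w ∈ (e : Sym2 V)) = {a, b} := by
      ext w
      simp only [Finset.mem_filter, Finset.mem_insert, Finset.mem_singleton,
        hCfin, Set.Finite.mem_toFinset, hab, Sym2.mem_iff]
      constructor
      · exact fun h => h.2
      · rintro (rfl | rfl)
        · exact ⟨haC.1, Or.inl rfl⟩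
        · exact ⟨haC.2, Or.inr rfl⟩
    rw [hfilter, Finset.card_pair hne, two_smul, zmod2_add_self]
  -- conclude evenness
  have hcast : ((Cfin.filter (fun w => srcAt ζ w = 1)).card : ZMod 2) = 0 := by
    rw [← sum_zmod2, hsum]
  have hdvd : 2 ∣ (Cfin.filter (fun w => srcAt ζ w = 1)).card :=
    (ZMod.natCast_eq_zero_iff _ 2).mp hcast
  have hsetEq : {w : V | (SimpleGraph.fromEdgeSet D).Reachable v₀ w ∧ srcAt ζ w = 1}
      = ↑(Cfin.filter (fun w => srcAt ζ w = 1)) := by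
    ext w
    simp [hCfin, Set.Finite.mem_toFinset, hCdef]
  rw [hsetEq, Set.ncard_coe_finset]
  exact even_iff_two_dvd.mpr hdvd


end UEGAux

theorem ueg_marginal_is_haar_on_bdryEvens {V : Type} [Countable V] [Infinite V]
    (G : SimpleGraph V)
    (hlf : ∀ v : V, {e : Sym2 V | e ∈ G.edgeSet ∧ v ∈ e}.Finite)
    (hconn : G.Connected)
    (E : Set (Sym2 V)) (hE : E ⊆ G.edgeSet) :
    -- characterisation of the restrictions of even configurations
    (∀ ω : E → ZMod 2,
      ω ∈ bdryEvens G E ↔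
        ∃ η : G.edgeSet → ZMod 2, IsEvenConf η ∧ restrictConf hE η = ω) ∧
    -- `Ω^ξ_∅` is a closed subgroup
    ((0 : E → ZMod 2) ∈ bdryEvens G E ∧
      (∀ ω ∈ bdryEvens G E, ∀ ω' ∈ bdryEvens G E, ω + ω' ∈ bdryEvens G E) ∧
      (∀ ω ∈ bdryEvens G E, -ω ∈ bdryEvens G E) ∧
      IsClosed (bdryEvens G E)) ∧
    -- the pushforward of the UEG under restriction is the Haar probability measure on it
    (∃ μ, IsUEG G.edgeSet μ) ∧
    (∀ μ, IsUEG G.edgeSet μ →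
      IsProbabilityMeasure (Measure.map (restrictConf hE) μ) ∧
      Measure.map (restrictConf hE) μ (bdryEvens G E) = 1 ∧
      ∀ γ ∈ bdryEvens G E,
        Measure.map (fun ω => ω + γ) (Measure.map (restrictConf hE) μ)
          = Measure.map (restrictConf hE) μ) := by
    classical
  have hDsub : G.edgeSet \ E ⊆ G.edgeSet := Set.diff_subset
  have hfinE : ∀ v : V, {e : E | v ∈ (e : Sym2 V)}.Finite :=
    fun v => UEGAux.subtype_incident_finite hE hlf v
  have hfinG : ∀ v : V, {e : G.edgeSet | v ∈ (e : Sym2 V)}.Finite :=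
    fun v => UEGAux.subtype_incident_finite (le_refl _) hlf v
  have hfinD : ∀ v : V, {e : (G.edgeSet \ E : Set (Sym2 V)) | v ∈ (e : Sym2 V)}.Finite :=
    fun v => UEGAux.subtype_incident_finite hDsub hlf v
  have hdiag : ∀ e ∈ G.edgeSet \ E, ¬ Sym2.IsDiag e :=
    fun e he => G.not_isDiag_of_mem_edgeSet he.1
  have hfr : fringeGraph G E = SimpleGraph.fromEdgeSet (G.edgeSet \ E) := rfl
  -- restriction of an even configuration belongs to `bdryEvens`
  have hfwd : ∀ η : G.edgeSet → ZMod 2, IsEvenConf η →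
      restrictConf hE η ∈ bdryEvens G E := by
    intro η hη
    have hsplit : ∀ v, srcAt (restrictConf hE η) v
        = srcAt (restrictConf hDsub η) v := by
      intro v
      have h0 := UEGAux.srcAt_split hE hlf η v
      rw [hη v] at h0
      have h1 : srcAt (restrictConf hE η) v
          = - srcAt (restrictConf hDsub η) v :=
        eq_neg_of_add_eq_zero_left h0.symm
      rw [h1, UEGAux.zmod2_neg]
    constructor
    · intro v hv
      rw [hsplit v]
      have hempty : {e : (G.edgeSet \ E : Set (Sym2 V)) |
          restrictConf hDsub η e = 1 ∧ v ∈ (e : Sym2 V)} = ∅ := by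
        ext e
        simp only [Set.mem_setOf_eq, Set.mem_empty_iff_false, iff_false, not_and]
        exact fun _ => hv e.1 e.2
      rw [srcAt, hempty]
      simp
    · intro v _ hCfin
      have hhs := UEGAux.handshake hfinD hdiag (restrictConf hDsub η) (v₀ := v) hCfin
      have hseteq : {w : V | (fringeGraph G E).Reachable v w
            ∧ srcAt (restrictConf hE η) w = 1}
          = {w : V | (SimpleGraph.fromEdgeSet (G.edgeSet \ E)).Reachable v w
            ∧ srcAt (restrictConf hDsub η) w = 1} := by
        ext w
        simp only [Set.mem_setOf_eq, hfr]
        rw [hsplit w]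
      rw [hseteq]
      exact hhs
  -- every element of `bdryEvens` is the restriction of an even configuration
  have hbwd : ∀ ω ∈ bdryEvens G E,
      ∃ η : G.edgeSet → ZMod 2, IsEvenConf η ∧ restrictConf hE η = ω := by
    intro ω hω
    obtain ⟨hω1, hω2⟩ := hω
    obtain ⟨ζ, hζ⟩ := UEGAux.key hfinD (fun v => srcAt ω v) hω1 hω2
    set η : G.edgeSet → ZMod 2 := fun e =>
      if h : (e : Sym2 V) ∈ E then ω ⟨e.1, h⟩ else ζ ⟨e.1, ⟨e.2, h⟩⟩ with hηdef
    have hrE : restrictConf hE η = ω := by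
      funext e
      show η ⟨e.1, hE e.2⟩ = ω e
      rw [hηdef]
      exact dif_pos e.2
    have hrD : restrictConf hDsub η = ζ := by
      funext e
      show η ⟨e.1, hDsub e.2⟩ = ζ e
      rw [hηdef]
      exact dif_neg e.2.2
    refine ⟨η, ?_, hrE⟩
    intro v
    have h0 := UEGAux.srcAt_split hE hlf η v
    rw [hrE, hrD, hζ v] at h0
    rw [h0, UEGAux.zmod2_add_self]
  have hchar : ∀ ω : E → ZMod 2, ω ∈ bdryEvens G E ↔
      ∃ η : G.edgeSet → ZMod 2, IsEvenConf η ∧ restrictConf hE η = ω := by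
    intro ω
    constructor
    · exact hbwd ω
    · rintro ⟨η, hη, rfl⟩
      exact hfwd η hη
  -- the set of even configurations on the full edge set is closed
  have hclosedEven : IsClosed {η : G.edgeSet → ZMod 2 | IsEvenConf η} := by
    have hiI : {η : G.edgeSet → ZMod 2 | IsEvenConf η}
        = ⋂ v : V, (fun η : G.edgeSet → ZMod 2 => srcAt η v) ⁻¹' {0} := by
      ext η
      simp [IsEvenConf, Set.mem_iInter]
    rw [hiI]
    exact isClosed_iInter fun v =>
      IsClosed.preimage (UEGAux.continuous_srcAt (hfinG v)) isClosed_singleton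
  have hcontres : Continuous (restrictConf hE (E' := E)) :=
    continuous_pi fun e => continuous_apply _
  have himg : bdryEvens G E
      = restrictConf hE '' {η : G.edgeSet → ZMod 2 | IsEvenConf η} := by
    ext ω
    rw [hchar ω]
    constructor
    · rintro ⟨η, h1, h2⟩; exact ⟨η, h1, h2⟩
    · rintro ⟨η, h1, h2⟩; exact ⟨η, h1, h2⟩
  have hclosedBdry : IsClosed (bdryEvens G E) := by
    rw [himg]
    exact (hclosedEven.isCompact.image hcontres).isClosed
  refine ⟨hchar, ⟨?_, ?_, ?_, hclosedBdry⟩, ?_, ?_⟩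
  · -- 0 ∈ bdryEvens
    constructor
    · intro v _; exact UEGAux.srcAt_zero v
    · intro v _ _
      have hempty : {w : V | (fringeGraph G E).Reachable v w
          ∧ srcAt (0 : E → ZMod 2) w = 1} = ∅ := by
        ext w
        simp only [Set.mem_setOf_eq, Set.mem_empty_iff_false, iff_false, not_and]
        intro _
        rw [UEGAux.srcAt_zero]
        decide
      rw [hempty]
      simp
  · -- closed under addition
    intro ω hω ω' hω'
    obtain ⟨η, hη, hr⟩ := hbwd ω hω
    obtain ⟨η', hη', hr'⟩ := hbwd ω' hω'
    refine (hchar _).mpr ⟨η + η', ?_, ?_⟩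
    · intro v
      rw [UEGAux.srcAt_add (hfinG v), hη v, hη' v, add_zero]
    · rw [← hr, ← hr']; rfl
  · -- closed under negation
    intro ω hω
    have hnegid : -ω = ω := funext fun e => UEGAux.zmod2_neg (ω e)
    rw [hnegid]
    exact hω
  · -- existence of the uniform even subgraph measure
    set S : AddSubgroup (G.edgeSet → ZMod 2) :=
      { carrier := {η | IsEvenConf η}
        zero_mem' := fun v => UEGAux.srcAt_zero v
        add_mem' := by
          intro a b ha hb v
          rw [UEGAux.srcAt_add (hfinG v), ha v, hb v, add_zero]
        neg_mem' := by
          intro a ha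
          have hnegid : -a = a := funext fun e => UEGAux.zmod2_neg (a e)
          rw [hnegid]
          exact ha } with hSdef
    have hS : IsClosed (S : Set (G.edgeSet → ZMod 2)) := hclosedEven
    haveI : CompactSpace S := isCompact_iff_compactSpace.mp hS.isCompact
    haveI : Nonempty S := ⟨0⟩
    haveI : BorelSpace S := Subtype.borelSpace (S : Set (G.edgeSet → ZMod 2))
    let ν : Measure S := Measure.addHaarMeasure ⊤
    have hν1 : ν Set.univ = 1 := by
      have h := Measure.addHaarMeasure_self
        (K₀ := (⊤ : TopologicalSpace.PositiveCompacts S))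
      rwa [TopologicalSpace.PositiveCompacts.coe_top] at h
    haveI : IsProbabilityMeasure ν := ⟨hν1⟩
    refine ⟨Measure.map Subtype.val ν,
      Measure.isProbabilityMeasure_map measurable_subtype_coe.aemeasurable, ?_, ?_⟩
    · rw [Measure.map_apply measurable_subtype_coe hclosedEven.measurableSet]
      have : (Subtype.val ⁻¹' {η : G.edgeSet → ZMod 2 | IsEvenConf η} : Set S)
          = Set.univ := Subtype.coe_preimage_self _
      rw [this]
      exact hν1
    · intro γ hγ
      have hmm : Measurable (fun ω : G.edgeSet → ZMod 2 => ω + γ) :=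
        (continuous_id.add continuous_const).measurable
      have hmS : Measurable (fun x : S => (⟨γ, hγ⟩ : S) + x) :=
        (continuous_const.add continuous_id).measurable
      rw [Measure.map_map hmm measurable_subtype_coe]
      have hcomp : (fun ω : G.edgeSet → ZMod 2 => ω + γ) ∘ Subtype.val
          = Subtype.val ∘ (fun x : S => (⟨γ, hγ⟩ : S) + x) := by
        funext x; exact add_comm _ _
      rw [hcomp, ← Measure.map_map measurable_subtype_coe hmS,
        MeasureTheory.map_add_left_eq_self ν _]
  · -- the pushforward statement
    intro μ hμ
    obtain ⟨hprob, hfull, hinv⟩ := hμ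
    haveI := hprob
    have hmres : Measurable (restrictConf hE (E' := E)) := hcontres.measurable
    refine ⟨Measure.isProbabilityMeasure_map hmres.aemeasurable, ?_, ?_⟩
    · rw [Measure.map_apply hmres hclosedBdry.measurableSet]
      refine le_antisymm prob_le_one ?_
      calc (1 : ENNReal) = μ {η | IsEvenConf η} := hfull.symm
        _ ≤ μ (restrictConf hE ⁻¹' bdryEvens G E) :=
          measure_mono (fun η hη => hfwd η hη)
    · intro γ hγ
      obtain ⟨γ', hγ'even, hγ'r⟩ := hbwd γ hγ
      have hmadd : Measurable (fun ω : E → ZMod 2 => ω + γ) :=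
        (continuous_id.add continuous_const).measurable
      have hmadd' : Measurable (fun η : G.edgeSet → ZMod 2 => η + γ') :=
        (continuous_id.add continuous_const).measurable
      rw [Measure.map_map hmadd hmres]
      have hcomm : (fun ω : E → ZMod 2 => ω + γ) ∘ restrictConf hE
          = restrictConf hE ∘ (fun η : G.edgeSet → ZMod 2 => η + γ') := by
        funext η
        show restrictConf hE η + γ = restrictConf hE (η + γ')
        rw [← hγ'r]
        rfl
      rw [hcomm, ← Measure.map_map hmres hmadd', hinv γ' hγ'even]
end
end

section
/- Let V be a vertex set and E_1, E_2, E_3 pairwise disjoint sets of edges on V with E_1 and E_2 finite, and set G_2 = (V, E_1 ∪ E_2), G_3 = (V, E_1 ∪ E_2 ∪ E_3); assume G_3 is locally finite. Suppose the graph induced by E_2 (with vertex set the endpoints of edges of E_2) is connected, and its vertex set W is a separating surface between E_1 and E_3 in G_3: every path in G_3 from an endpoint of an edge of E_1 to an endpoint of an edge of E_3 visits a vertex of W. Then an element of (ZMod 2)^{E_1} is the restriction to E_1 of an even configuration of G_2 if and only if it is the restriction to E_1 of an even configuration of G_3; consequently the pushforwards of UEG_{G_2} and UEG_{G_3} under restriction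 to E_1 coincide. -/
open MeasureTheory

noncomputable section

/-- The vertices that are endpoints of an edge of `E`. -/
def eVerts {V : Type*} (E : Set (Sym2 V)) : Set V := {v | ∃ e ∈ E, v ∈ e}

namespace UegAux
variable {V : Type*}

lemma srcAt_eq_sum {E : Set (Sym2 V)} (ω : E → ZMod 2) (v : V)
    (h : {e : E | v ∈ (e : Sym2 V)}.Finite) :
    srcAt ω v = ∑ e ∈ h.toFinset, ω e := by
  classical
  have hset : {e : E | ω e = 1 ∧ v ∈ (e : Sym2 V)} = ↑(h.toFinset.filter (fun e => ω e = 1)) := by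
    ext e; simp [and_comm]
  rw [srcAt, hset, Set.ncard_coe_finset]
  have : ∀ e ∈ h.toFinset, ω e = if ω e = 1 then (1 : ZMod 2) else 0 := by
    intro e _
    rcases (by decide : ∀ x : ZMod 2, x = 0 ∨ x = 1) (ω e) with h0 | h0 <;> simp [h0]
  rw [Finset.sum_congr rfl this, Finset.sum_boole]

lemma srcAt_zero {E : Set (Sym2 V)} (v : V) : srcAt (0 : E → ZMod 2) v = 0 := by
  have : {e : E | (0 : E → ZMod 2) e = 1 ∧ v ∈ (e : Sym2 V)} = ∅ := by
    ext e; simp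
  simp [srcAt, this]

lemma srcAt_eq_zero_of {E : Set (Sym2 V)} (ω : E → ZMod 2) (v : V)
    (h : ∀ e : E, v ∈ (e : Sym2 V) → ω e = 0) : srcAt ω v = 0 := by
  have : {e : E | ω e = 1 ∧ v ∈ (e : Sym2 V)} = ∅ := by
    ext e; simp only [Set.mem_setOf_eq, Set.mem_empty_iff_false, iff_false, not_and]
    intro h1 hv; rw [h e hv] at h1; exact one_ne_zero h1.symm
  simp [srcAt, this]

lemma srcAt_add {E : Set (Sym2 V)} (ω ω' : E → ZMod 2) (v : V)
    (h : {e : E | v ∈ (e : Sym2 V)}.Finite) :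
    srcAt (ω + ω') v = srcAt ω v + srcAt ω' v := by
  rw [srcAt_eq_sum _ _ h, srcAt_eq_sum _ _ h, srcAt_eq_sum _ _ h, ← Finset.sum_add_distrib]
  rfl

open Classical in
def extendZero {A B : Set (Sym2 V)} (_hAB : A ⊆ B) (ω : A → ZMod 2) : B → ZMod 2 :=
  fun e => if h : (e : Sym2 V) ∈ A then ω ⟨e, h⟩ else 0

lemma incid_mono {A B : Set (Sym2 V)} (hAB : A ⊆ B) (v : V)
    (h : {e : B | v ∈ (e : Sym2 V)}.Finite) : {e : A | v ∈ (e : Sym2 V)}.Finite := by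
  have : {e : A | v ∈ (e : Sym2 V)} =
      Subtype.val ⁻¹' (Subtype.val '' {e : B | v ∈ (e : Sym2 V)}) := by
    ext e
    constructor
    · intro he; exact ⟨⟨e, hAB e.2⟩, he, rfl⟩
    · rintro ⟨b, hb, hbe⟩; simpa [← hbe] using hb
  rw [this]
  exact Set.Finite.preimage (Set.injOn_of_injective Subtype.val_injective) (h.image _)

lemma sum_incidence_subtype {A B : Set (Sym2 V)} (hAB : A ⊆ B) (v : V) (f : B → ZMod 2)
    (hB : {e : B | v ∈ (e : Sym2 V)}.Finite) (hA : {e : A | v ∈ (e : Sym2 V)}.Finite)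
    (hzero : ∀ e : B, v ∈ (e : Sym2 V) → (e : Sym2 V) ∉ A → f e = 0) :
    ∑ e ∈ hB.toFinset, f e = ∑ e ∈ hA.toFinset, f ⟨(e : Sym2 V), hAB e.2⟩ := by
  classical
  have h1 : ∑ e ∈ hB.toFinset, f e
      = ∑ e ∈ hB.toFinset.filter (fun (e : B) => (e : Sym2 V) ∈ A), f e := by
    refine (Finset.sum_subset (Finset.filter_subset _ _) ?_).symm
    intro e he hne
    simp only [Finset.mem_filter, Set.Finite.mem_toFinset, Set.mem_setOf_eq] at he hne
    exact hzero e he (fun hh => hne ⟨he, hh⟩)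
  rw [h1]
  refine Finset.sum_bij' (fun e he => (⟨(e : Sym2 V), by
      simp only [Finset.mem_filter] at he; exact he.2⟩ : A))
    (fun e he => (⟨(e : Sym2 V), hAB e.2⟩ : B)) ?_ ?_ ?_ ?_ ?_
  · intro e he
    simp only [Finset.mem_filter, Set.Finite.mem_toFinset, Set.mem_setOf_eq] at he ⊢
    exact he.1
  · intro e he
    simp only [Set.Finite.mem_toFinset, Set.mem_setOf_eq] at he
    simp only [Finset.mem_filter, Set.Finite.mem_toFinset, Set.mem_setOf_eq]
    exact ⟨he, e.2⟩
  · intro e he; rfl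
  · intro e he; rfl
  · intro e he; rfl

lemma srcAt_extendZero {A B : Set (Sym2 V)} (hAB : A ⊆ B) (ω : A → ZMod 2) (v : V)
    (hB : {e : B | v ∈ (e : Sym2 V)}.Finite) :
    srcAt (extendZero hAB ω) v = srcAt ω v := by
  have hA := incid_mono hAB v hB
  rw [srcAt_eq_sum _ _ hB, srcAt_eq_sum _ _ hA]
  rw [sum_incidence_subtype hAB v _ hB hA]
  · exact Finset.sum_congr rfl (fun e _ => by simp [extendZero, e.2])
  · intro e hv hne; simp [extendZero, hne]


open Classical in
lemma srcAt_single {E : Set (Sym2 V)} (f : Sym2 V) (hf : f ∈ E) (v : V) :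
    srcAt (fun e : E => if (e : Sym2 V) = f then 1 else 0) v
      = if v ∈ f then 1 else 0 := by
  classical
  have hone : ∀ e : E, ((if (e : Sym2 V) = f then (1 : ZMod 2) else 0) = 1 ↔ (e : Sym2 V) = f) := by
    intro e; split <;> simp_all
  by_cases hv : v ∈ f
  · have : {e : E | (if (e : Sym2 V) = f then (1:ZMod 2) else 0) = 1 ∧ v ∈ (e : Sym2 V)}
        = {(⟨f, hf⟩ : E)} := by
      ext e
      simp only [Set.mem_setOf_eq, Set.mem_singleton_iff, hone e]
      constructor
      · rintro ⟨h1, _⟩; exact Subtype.ext h1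
      · rintro rfl; exact ⟨rfl, hv⟩
    rw [srcAt, this]; simp [hv]
  · have : {e : E | (if (e : Sym2 V) = f then (1:ZMod 2) else 0) = 1 ∧ v ∈ (e : Sym2 V)} = ∅ := by
      ext e
      simp only [Set.mem_setOf_eq, Set.mem_empty_iff_false, iff_false, not_and, hone e]
      rintro rfl hv'; exact hv hv'
    rw [srcAt, this]; simp [hv]

lemma eVerts_finite {E : Set (Sym2 V)} (h : E.Finite) : (eVerts E).Finite := by
  have : eVerts E ⊆ ⋃ e ∈ E, {v | v ∈ e} := by
    rintro v ⟨e, he, hv⟩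
    exact Set.mem_biUnion he hv
  refine Set.Finite.subset (Set.Finite.biUnion h (fun e _ => ?_)) this
  induction e with
  | _ a b => exact (Set.finite_singleton a).insert b |>.subset (by
      intro v hv
      rcases Sym2.mem_iff.1 hv with rfl | rfl <;> simp)

lemma mem_eVerts {E : Set (Sym2 V)} {v : V} : v ∈ eVerts E ↔ ∃ e ∈ E, v ∈ e := Iff.rfl

lemma endpoint_mem_eVerts {E : Set (Sym2 V)} {e : Sym2 V} (he : e ∈ E) {v : V} (hv : v ∈ e) :
    v ∈ eVerts E := ⟨e, he, hv⟩

open Classical in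
lemma filter_endpoints_card {e : Sym2 V} (hnd : ¬ e.IsDiag) (S : Finset V)
    (hS : ∀ v, v ∈ e → v ∈ S) :
    (S.filter (fun v => v ∈ e)).card = 2 := by
  classical
  induction e with
  | _ a b =>
    have hab : a ≠ b := by simpa [Sym2.isDiag_iff_proj_eq] using hnd
    have : S.filter (fun v => v ∈ (s(a, b) : Sym2 V)) = {a, b} := by
      ext v
      simp only [Finset.mem_filter, Sym2.mem_iff, Finset.mem_insert, Finset.mem_singleton]
      constructor
      · rintro ⟨_, h⟩; exact h
      · rintro (rfl | rfl)
        · exact ⟨hS v (by simp), Or.inl rfl⟩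
        · exact ⟨hS v (by simp), Or.inr rfl⟩
    rw [this, Finset.card_insert_of_notMem (by simpa using hab), Finset.card_singleton]

open Classical in
lemma walk_srcAt {E2 E12 : Set (Sym2 V)} (hsub : E2 ⊆ E12)
    (hfin : ∀ v : V, {e : E12 | v ∈ (e : Sym2 V)}.Finite) {x y : V}
    (p : (SimpleGraph.fromEdgeSet E2).Walk x y) :
    (∀ e : E12, ((p.edges.count (e : Sym2 V) : ℕ) : ZMod 2) ≠ 0 → (e : Sym2 V) ∈ E2) ∧
    (∀ v : V, srcAt (fun e : E12 => ((p.edges.count (e : Sym2 V) : ℕ) : ZMod 2)) v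
      = (if v = x then 1 else 0) + (if v = y then 1 else 0)) := by
  classical
  induction p with
  | nil =>
    rename_i u
    constructor
    · intro e he; simp at he
    · intro v
      have h0 : (fun e : E12 => (((SimpleGraph.Walk.nil (u := u)
          (G := SimpleGraph.fromEdgeSet E2)).edges.count (e : Sym2 V) : ℕ) : ZMod 2))
          = (0 : E12 → ZMod 2) := by
        funext e; simp
      rw [h0, srcAt_zero]
      by_cases hv : v = u <;> simp [hv] <;> decide
  | cons hadj p ih =>
    rename_i a b c
    obtain ⟨hmem, hne⟩ := (SimpleGraph.fromEdgeSet_adj E2).1 hadj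
    have hsplit : (fun e : E12 => ((((SimpleGraph.Walk.cons hadj p).edges.count
          (e : Sym2 V) : ℕ)) : ZMod 2))
        = (fun e : E12 => ((p.edges.count (e : Sym2 V) : ℕ) : ZMod 2))
          + (fun e : E12 => if (e : Sym2 V) = s(a, b) then 1 else 0) := by
      funext e
      simp only [SimpleGraph.Walk.edges_cons, List.count_cons, beq_iff_eq, Pi.add_apply]
      push_cast [Nat.cast_ite]
      by_cases hc : (e : Sym2 V) = s(a, b) <;> simp [hc, eq_comm]
    constructor
    · intro e he
      have hce := congrFun hsplit e
      by_cases h1 : (e : Sym2 V) = s(a, b)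
      · rw [h1]; exact hmem
      · refine ih.1 e (fun h0 => he ?_)
        rw [hce]
        simp [h0, h1]
    · intro v
      rw [hsplit, srcAt_add _ _ _ (hfin v), ih.2 v, srcAt_single (s(a,b)) (hsub hmem) v]
      have hmem_iff : (if v ∈ (s(a,b) : Sym2 V) then (1 : ZMod 2) else 0)
          = (if v = a then 1 else 0) + (if v = b then 1 else 0) := by
        by_cases h1 : v = a
        · subst h1; simp [Sym2.mem_iff, hne]
        · by_cases h2 : v = b
          · subst h2; simp [Sym2.mem_iff, h1]
          · simp [Sym2.mem_iff, h1, h2]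
      rw [hmem_iff]
      have : ∀ A B C : ZMod 2, (B + C) + (A + B) = A + C := by decide
      exact this _ _ _

open Classical in
lemma realize {E2 E12 : Set (Sym2 V)} (hsub : E2 ⊆ E12)
    (hfin : ∀ v : V, {e : E12 | v ∈ (e : Sym2 V)}.Finite) (h2fin : E2.Finite)
    (hWconn : ∀ x ∈ eVerts E2, ∀ y ∈ eVerts E2,
      (SimpleGraph.fromEdgeSet E2).Reachable x y) :
    ∀ (n : ℕ) (δ : V → ZMod 2), (∀ v, δ v ≠ 0 → v ∈ eVerts E2) →
      (((eVerts_finite h2fin).toFinset.filter (fun v => δ v ≠ 0)).card ≤ n) →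
      (∑ v ∈ (eVerts_finite h2fin).toFinset, δ v = 0) →
      ∃ γ : E12 → ZMod 2, (∀ e, γ e ≠ 0 → (e : Sym2 V) ∈ E2) ∧ ∀ v, srcAt γ v = δ v := by
  classical
  set Wfin := (eVerts_finite h2fin).toFinset with hWfin
  intro n
  induction n with
  | zero =>
    intro δ hsupp hcard _
    have hδ : δ = 0 := by
      funext v
      by_contra hv
      have hvW : v ∈ Wfin := by
        simp only [hWfin, Set.Finite.mem_toFinset]; exact hsupp v hv
      have : v ∈ Wfin.filter (fun v => δ v ≠ 0) := Finset.mem_filter.2 ⟨hvW, hv⟩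
      have := Finset.card_pos.2 ⟨v, this⟩
      omega
    exact ⟨0, fun e h0 => absurd rfl h0, fun v => by rw [srcAt_zero]; simp [hδ]⟩
  | succ n ih =>
    intro δ hsupp hcard hsum
    by_cases hfe : Wfin.filter (fun v => δ v ≠ 0) = ∅
    · have hδ : δ = 0 := by
        funext v
        by_contra hv
        have hvW : v ∈ Wfin := by
          simp only [hWfin, Set.Finite.mem_toFinset]; exact hsupp v hv
        have : v ∈ Wfin.filter (fun v => δ v ≠ 0) := Finset.mem_filter.2 ⟨hvW, hv⟩
        simp [hfe] at this
      exact ⟨0, fun e h0 => absurd rfl h0, fun v => by rw [srcAt_zero]; simp [hδ]⟩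
    · obtain ⟨x, hx⟩ := Finset.nonempty_iff_ne_empty.2 hfe
      obtain ⟨hxW, hxδ⟩ := Finset.mem_filter.1 hx
      have hxδ1 : δ x = 1 := by
        rcases (by decide : ∀ z : ZMod 2, z = 0 ∨ z = 1) (δ x) with h | h
        · exact absurd h hxδ
        · exact h
      -- find y ≠ x in the support
      have hsum' : ∑ v ∈ Wfin.filter (fun v => δ v ≠ 0), δ v = 0 := by
        rw [Finset.sum_filter_ne_zero]; exact hsum
      have hyex : ∃ y ∈ Wfin.filter (fun v => δ v ≠ 0), y ≠ x := by
        by_contra hno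
        push_neg at hno
        have : Wfin.filter (fun v => δ v ≠ 0) = {x} := by
          apply Finset.eq_singleton_iff_unique_mem.2 ⟨hx, hno⟩
        rw [this, Finset.sum_singleton, hxδ1] at hsum'
        exact one_ne_zero hsum'
      obtain ⟨y, hy, hyx⟩ := hyex
      obtain ⟨hyW, hyδ⟩ := Finset.mem_filter.1 hy
      have hyδ1 : δ y = 1 := by
        rcases (by decide : ∀ z : ZMod 2, z = 0 ∨ z = 1) (δ y) with h | h
        · exact absurd h hyδ
        · exact h
      have hxE : x ∈ eVerts E2 := by simpa [hWfin, Set.Finite.mem_toFinset] using hxW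
      have hyE : y ∈ eVerts E2 := by simpa [hWfin, Set.Finite.mem_toFinset] using hyW
      obtain ⟨p⟩ := hWconn x hxE y hyE
      set γp : E12 → ZMod 2 := fun e => ((p.edges.count (e : Sym2 V) : ℕ) : ZMod 2) with hγp
      obtain ⟨hp1, hp2⟩ := walk_srcAt hsub hfin p
      set δ' : V → ZMod 2 :=
        fun v => δ v + ((if v = x then 1 else 0) + (if v = y then 1 else 0)) with hδ'
      have hsupp' : ∀ v, δ' v ≠ 0 → v ∈ eVerts E2 := by
        intro v hv
        by_cases h1 : v = x
        · exact h1 ▸ hxE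
        · by_cases h2 : v = y
          · exact h2 ▸ hyE
          · refine hsupp v ?_
            simpa [hδ', h1, h2] using hv
      have hsub' : Wfin.filter (fun v => δ' v ≠ 0)
          ⊆ (Wfin.filter (fun v => δ v ≠ 0)).erase x := by
        intro v hv
        obtain ⟨hvW, hvδ'⟩ := Finset.mem_filter.1 hv
        have h1 : v ≠ x := by
          rintro rfl
          apply hvδ'
          simp only [hδ', if_pos rfl, if_neg hyx.symm, hxδ1]
          decide
        have h2 : v ≠ y := by
          rintro rfl
          apply hvδ'
          simp only [hδ', if_neg (by exact fun h => h1 h), if_pos rfl, hyδ1]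
          decide
        refine Finset.mem_erase.2 ⟨h1, Finset.mem_filter.2 ⟨hvW, ?_⟩⟩
        simpa [hδ', h1, h2] using hvδ'
      have hcard' : (Wfin.filter (fun v => δ' v ≠ 0)).card ≤ n := by
        have := Finset.card_le_card hsub'
        rw [Finset.card_erase_of_mem hx] at this
        omega
      have hsum'' : ∑ v ∈ Wfin, δ' v = 0 := by
        simp only [hδ']
        rw [Finset.sum_add_distrib, Finset.sum_add_distrib, hsum]
        rw [Finset.sum_ite_eq' Wfin x (fun _ => (1 : ZMod 2)),
          Finset.sum_ite_eq' Wfin y (fun _ => (1 : ZMod 2))]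
        simp only [hxW, hyW, if_pos]
        decide
      obtain ⟨γ', hγ'supp, hγ'src⟩ := ih δ' hsupp' hcard' hsum''
      refine ⟨γ' + γp, ?_, ?_⟩
      · intro e h0
        by_cases h1 : γp e = 0
        · exact hγ'supp e (by simpa [h1] using h0)
        · exact hp1 e h1
      · intro v
        rw [srcAt_add _ _ _ (hfin v), hγ'src v, hp2 v]
        simp only [hδ']
        generalize (if v = x then (1:ZMod 2) else 0) = A
        generalize (if v = y then (1:ZMod 2) else 0) = B
        exact (by decide : ∀ a A B : ZMod 2, (a + (A + B)) + (A + B) = a) _ _ _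

lemma incid_finite_of_finite {E1 : Set (Sym2 V)} (h1fin : E1.Finite) (v : V) :
    {e : E1 | v ∈ (e : Sym2 V)}.Finite := by
  haveI := h1fin.to_subtype
  exact Set.toFinite _

open Classical in
lemma sum_srcAt_eq_zero {E1 : Set (Sym2 V)} (h1fin : E1.Finite) (σ : E1 → ZMod 2)
    (hnd : ∀ e ∈ E1, ¬ e.IsDiag) (S : Finset V) (hS : ∀ v ∈ eVerts E1, v ∈ S) :
    ∑ v ∈ S, srcAt σ v = 0 := by
  classical
  haveI := h1fin.fintype
  have hform : ∀ v : V, srcAt σ v = ∑ e : E1, if v ∈ (e : Sym2 V) then σ e else 0 := by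
    intro v
    rw [srcAt_eq_sum σ v (incid_finite_of_finite h1fin v)]
    rw [← Finset.sum_filter]
    apply Finset.sum_congr _ (fun _ _ => rfl)
    ext e
    simp
  calc ∑ v ∈ S, srcAt σ v
      = ∑ v ∈ S, ∑ e : E1, if v ∈ (e : Sym2 V) then σ e else 0 := by
        exact Finset.sum_congr rfl (fun v _ => hform v)
    _ = ∑ e : E1, ∑ v ∈ S, if v ∈ (e : Sym2 V) then σ e else 0 := Finset.sum_comm
    _ = 0 := by
        refine Finset.sum_eq_zero (fun e _ => ?_)
        rw [← Finset.sum_filter, Finset.sum_const]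
        rw [filter_endpoints_card (hnd e e.2) S
          (fun v hv => hS v (endpoint_mem_eVerts e.2 hv))]
        exact (by decide : ∀ z : ZMod 2, 2 • z = 0) _

lemma sum_eq_of_support_subset (δ : V → ZMod 2) (F F' : Finset V)
    (h : ∀ v, δ v ≠ 0 → v ∈ F ∧ v ∈ F') : ∑ v ∈ F, δ v = ∑ v ∈ F', δ v := by
  classical
  have h1 : ∑ v ∈ F ∩ F', δ v = ∑ v ∈ F, δ v :=
    Finset.sum_subset Finset.inter_subset_left (fun v _ hv => by
      by_contra h0
      exact hv (Finset.mem_inter.2 (h v h0)))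
  have h2 : ∑ v ∈ F ∩ F', δ v = ∑ v ∈ F', δ v :=
    Finset.sum_subset Finset.inter_subset_right (fun v _ hv => by
      by_contra h0
      exact hv (Finset.mem_inter.2 (h v h0)))
  rw [← h1, h2]

lemma zmod2_add_self (a : ZMod 2) : a + a = 0 := by revert a; decide

lemma incid_of_hlf {E : Set (Sym2 V)} (hlf : ∀ v : V, {e : Sym2 V | e ∈ E ∧ v ∈ e}.Finite)
    (v : V) : {e : E | v ∈ (e : Sym2 V)}.Finite := by
  have : {e : E | v ∈ (e : Sym2 V)} = Subtype.val ⁻¹' {f : Sym2 V | f ∈ E ∧ v ∈ f} := by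
    ext e; simp [e.2]
  rw [this]
  exact Set.Finite.preimage (Set.injOn_of_injective Subtype.val_injective) (hlf v)

lemma part1 {E1 E2 E3 : Set (Sym2 V)}
    (hd12 : Disjoint E1 E2)
    (h1fin : E1.Finite) (h2fin : E2.Finite)
    (hsimple : ∀ e ∈ E1 ∪ E2 ∪ E3, ¬ e.IsDiag)
    (hlf : ∀ v : V, {e : Sym2 V | e ∈ E1 ∪ E2 ∪ E3 ∧ v ∈ e}.Finite)
    (hWconn : ∀ x ∈ eVerts E2, ∀ y ∈ eVerts E2,
      (SimpleGraph.fromEdgeSet E2).Reachable x y)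
    (hsep13 : eVerts E1 ∩ eVerts E3 ⊆ eVerts E2)
    (σ : E1 → ZMod 2) :
    (∃ η : ↥(E1 ∪ E2) → ZMod 2, (∀ v, srcAt η v = 0) ∧
        restrictConf (Set.subset_union_left : E1 ⊆ E1 ∪ E2) η = σ) ↔
    (∃ η : ↥(E1 ∪ E2 ∪ E3) → ZMod 2, (∀ v, srcAt η v = 0) ∧
        restrictConf (Set.subset_union_left.trans Set.subset_union_left :
          E1 ⊆ E1 ∪ E2 ∪ E3) η = σ) := by
  classical
  have h1E : E1 ⊆ E1 ∪ E2 ∪ E3 := Set.subset_union_left.trans Set.subset_union_left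
  have h112 : E1 ⊆ E1 ∪ E2 := Set.subset_union_left
  have h12E : E1 ∪ E2 ⊆ E1 ∪ E2 ∪ E3 := Set.subset_union_left
  have h212 : E2 ⊆ E1 ∪ E2 := Set.subset_union_right
  have hfinE : ∀ v : V, {e : ↥(E1 ∪ E2 ∪ E3) | v ∈ (e : Sym2 V)}.Finite :=
    fun v => incid_of_hlf hlf v
  have hfin12 : ∀ v : V, {e : ↥(E1 ∪ E2) | v ∈ (e : Sym2 V)}.Finite :=
    fun v => incid_mono h12E v (hfinE v)
  have hfin1 : ∀ v : V, {e : ↥E1 | v ∈ (e : Sym2 V)}.Finite :=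
    fun v => incid_mono h112 v (hfin12 v)
  constructor
  · rintro ⟨η, hη, hrestr⟩
    refine ⟨extendZero h12E η, ?_, ?_⟩
    · intro v
      rw [srcAt_extendZero h12E η v (hfinE v)]
      exact hη v
    · funext e
      have h1 : (e : Sym2 V) ∈ E1 ∪ E2 := h112 e.2
      have : restrictConf h1E (extendZero h12E η) e = η ⟨(e : Sym2 V), h1⟩ := by
        simp [restrictConf, extendZero, h1]
      rw [this, ← hrestr]
      rfl
  · rintro ⟨η, hη, hrestr⟩
    -- the defect
    set δ : V → ZMod 2 := fun v => srcAt σ v with hδ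
    have hsupp1 : ∀ v, δ v ≠ 0 → v ∈ eVerts E1 := by
      intro v hv
      by_contra hne
      exact hv (srcAt_eq_zero_of σ v (fun e he => absurd ⟨e, e.2, he⟩ hne))
    have hsupp2 : ∀ v, δ v ≠ 0 → v ∈ eVerts E2 := by
      intro v hv
      by_contra hv2
      have hv1 := hsupp1 v hv
      have hv3 : v ∉ eVerts E3 := fun hv3 => hv2 (hsep13 ⟨hv1, hv3⟩)
      -- ρ is η minus the E1-part
      set ρ : ↥(E1 ∪ E2 ∪ E3) → ZMod 2 := η + extendZero h1E σ with hρ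
      have hηeq : η = extendZero h1E σ + ρ := by
        funext e
        simp only [hρ, Pi.add_apply]
        exact ((by decide : ∀ a b : ZMod 2, b = a + (b + a)) _ _)
      have hρ0 : srcAt ρ v = 0 := by
        refine srcAt_eq_zero_of ρ v (fun e he => ?_)
        rcases e.2 with (h1 | h2) | h3
        · have : extendZero h1E σ e = η e := by
            have : σ ⟨(e : Sym2 V), h1⟩ = η e := by
              rw [← hrestr]; simp [restrictConf]
            simp [extendZero, h1, this]
          simp [hρ, this, zmod2_add_self]
        · exact absurd ⟨(e : Sym2 V), h2, he⟩ hv2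
        · exact absurd ⟨(e : Sym2 V), h3, he⟩ hv3
      have h0 : srcAt η v = 0 := hη v
      rw [hηeq, srcAt_add _ _ _ (hfinE v), hρ0, add_zero,
        srcAt_extendZero h1E σ v (hfinE v)] at h0
      exact hv h0
    -- realize the defect on E2
    have hnd1 : ∀ e ∈ E1, ¬ e.IsDiag := fun e he =>
      hsimple e (Set.mem_union_left _ (Set.mem_union_left _ he))
    have hsum0 : ∑ v ∈ (eVerts_finite h2fin).toFinset, δ v = 0 := by
      rw [← sum_eq_of_support_subset δ (eVerts_finite h1fin).toFinset
        (eVerts_finite h2fin).toFinset (fun v hv => by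
          simp only [Set.Finite.mem_toFinset]
          exact ⟨hsupp1 v hv, hsupp2 v hv⟩)]
      exact sum_srcAt_eq_zero h1fin σ hnd1 _ (fun v hv => (Set.Finite.mem_toFinset _).2 hv)
    obtain ⟨γ, hγsupp, hγsrc⟩ := realize h212 hfin12 h2fin hWconn
      ((eVerts_finite h2fin).toFinset.filter (fun v => δ v ≠ 0)).card δ hsupp2
      le_rfl hsum0
    refine ⟨extendZero h112 σ + γ, ?_, ?_⟩
    · intro v
      rw [srcAt_add _ _ _ (hfin12 v), srcAt_extendZero h112 σ v (hfin12 v), hγsrc v]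
      exact zmod2_add_self _
    · funext e
      have hγ0 : γ ⟨(e : Sym2 V), h112 e.2⟩ = 0 := by
        by_contra hne
        exact Set.disjoint_left.1 hd12 e.2 (hγsupp _ hne)
      simp [restrictConf, extendZero, e.2, hγ0]

lemma haar_push {A : Type*} [MeasurableSpace A] [AddCommGroup A]
    {G : Type*} [AddCommGroup G] [TopologicalSpace G] [IsTopologicalAddGroup G]
    [CompactSpace G] [T2Space G] [MeasurableSpace G] [BorelSpace G]
    (f : G →+ A) (hfm : Measurable f)
    (hadd : ∀ g : G, Measurable (fun a : A => a + f g)) :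
    ∃ μ : Measure A, IsProbabilityMeasure μ ∧ μ (Set.range f) = 1 ∧
      ∀ g : G, Measure.map (fun a => a + f g) μ = μ := by
  have hne : Nonempty G := ⟨0⟩
  let K₀ : TopologicalSpace.PositiveCompacts G :=
    ⟨⟨Set.univ, isCompact_univ⟩, by simp⟩
  let ν := Measure.addHaarMeasure K₀
  have hν1 : ν Set.univ = 1 := Measure.addHaarMeasure_self (K₀ := K₀)
  have hprob : IsProbabilityMeasure (ν.map f) := by
    constructor
    rw [Measure.map_apply hfm MeasurableSet.univ]
    simpa using hν1
  refine ⟨ν.map f, hprob, ?_, ?_⟩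
  · refine le_antisymm prob_le_one ?_
    have := Measure.le_map_apply (μ := ν) hfm.aemeasurable (Set.range f)
    rwa [Set.preimage_range, hν1] at this
  · intro g
    have hg : Measurable (fun x : G => x + g) :=
      (continuous_add_right g).measurable
    have hgν : Measure.map (fun x : G => x + g) ν = ν := by
      have hfun : (fun x : G => x + g) = (fun x : G => g + x) := by
        funext x; exact add_comm _ _
      rw [hfun]
      exact MeasureTheory.map_add_left_eq_self ν g
    calc Measure.map (fun a => a + f g) (ν.map f)
        = Measure.map ((fun a => a + f g) ∘ f) ν := Measure.map_map (hadd g) hfm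
      _ = Measure.map (f ∘ (fun x : G => x + g)) ν := by
          congr 1
          funext x
          simp [Function.comp, map_add]
      _ = Measure.map f (Measure.map (fun x : G => x + g) ν) :=
          (Measure.map_map hfm hg).symm
      _ = ν.map f := by rw [hgν]


instance : BorelSpace (ZMod 2) := ⟨borel_eq_top_of_discrete.symm⟩

lemma measurable_zmod2 {α : Type*} [MeasurableSpace α] (g : ZMod 2 → α → ZMod 2)
    (h : ∀ x, Measurable (g x)) : True := trivial

def evenSubgroup (E : Set (Sym2 V)) (hfin : ∀ v : V, {e : E | v ∈ (e : Sym2 V)}.Finite) :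
    AddSubgroup (E → ZMod 2) where
  carrier := {ω | IsEvenConf ω}
  zero_mem' := fun v => srcAt_zero v
  add_mem' := by
    intro ω ω' hω hω' v
    rw [srcAt_add _ _ _ (hfin v), hω v, hω' v, add_zero]
  neg_mem' := by
    intro ω hω
    have : -ω = ω := by
      funext e
      exact (by decide : ∀ x : ZMod 2, -x = x) _
    rw [this]
    exact hω

lemma ueg_exists {E : Set (Sym2 V)}
    (hfin : ∀ v : V, {e : E | v ∈ (e : Sym2 V)}.Finite) :
    ∃ μ : Measure (E → ZMod 2), IsUEG E μ := by
  classical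
  set S := evenSubgroup E hfin with hS
  have hSclosed : IsClosed (S : Set (E → ZMod 2)) := by
    have : (S : Set (E → ZMod 2)) = ⋂ v : V, (fun ω => srcAt ω v) ⁻¹' {0} := by
      ext ω
      simp only [Set.mem_iInter, Set.mem_preimage, Set.mem_singleton_iff]
      rfl
    rw [this]
    refine isClosed_iInter (fun v => ?_)
    have hcont : Continuous (fun ω : E → ZMod 2 => srcAt ω v) := by
      have : (fun ω : E → ZMod 2 => srcAt ω v)
          = (fun ω => ∑ e ∈ (hfin v).toFinset, ω e) := by
        funext ω; exact srcAt_eq_sum ω v (hfin v)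
      rw [this]
      exact continuous_finset_sum _ (fun e _ => continuous_apply e)
    exact isClosed_singleton.preimage hcont
  letI : MeasurableSpace ↥S := borel ↥S
  haveI : BorelSpace ↥S := ⟨rfl⟩
  haveI : CompactSpace ↥S := isCompact_iff_compactSpace.mp hSclosed.isCompact
  have hfm : Measurable (S.subtype : ↥S → (E → ZMod 2)) := by
    rw [measurable_pi_iff]
    intro e
    exact ((continuous_apply e).comp continuous_subtype_val).measurable
  have hadd : ∀ g : ↥S, Measurable (fun a : E → ZMod 2 => a + S.subtype g) := by
    intro g
    rw [measurable_pi_iff]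
    intro e
    exact Measurable.comp (fun t _ => (by trivial : MeasurableSet ((fun x : ZMod 2 => x + S.subtype g e) ⁻¹' t))) (measurable_pi_apply e)
  obtain ⟨μ, hμprob, hμrange, hμinv⟩ := haar_push S.subtype hfm hadd
  refine ⟨μ, hμprob, ?_, ?_⟩
  · have : Set.range S.subtype = {ω | IsEvenConf ω} := by
      rw [AddSubgroup.coe_subtype, Subtype.range_coe]
      rfl
    rwa [this] at hμrange
  · intro γ hγ
    exact hμinv ⟨γ, hγ⟩

lemma msc_pi {E1 : Set (Sym2 V)} (h1fin : E1.Finite) :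
    MeasurableSingletonClass (E1 → ZMod 2) := by
  haveI := h1fin.to_subtype
  constructor
  intro σ
  have : ({σ} : Set (E1 → ZMod 2)) = ⋂ e : E1, (fun ω => ω e) ⁻¹' {σ e} := by
    ext ω
    simp [funext_iff]
  rw [this]
  exact MeasurableSet.iInter (fun e => (measurable_pi_apply e) (by trivial))

lemma measurable_restrictConf {E1 E : Set (Sym2 V)} (hsub : E1 ⊆ E) :
    Measurable (restrictConf (V := V) hsub) := by
  rw [measurable_pi_iff]
  intro e
  exact measurable_pi_apply _

lemma restrictConf_add {E1 E : Set (Sym2 V)} (hsub : E1 ⊆ E) (ω ω' : E → ZMod 2) :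
    restrictConf hsub (ω + ω') = restrictConf hsub ω + restrictConf hsub ω' := rfl

lemma marginal_props {E1 E : Set (Sym2 V)} (hsub : E1 ⊆ E) (h1fin : E1.Finite)
    (hfinE : ∀ v : V, {e : E | v ∈ (e : Sym2 V)}.Finite)
    (μ : Measure (E → ZMod 2)) (hμ : IsUEG E μ) :
    IsProbabilityMeasure (Measure.map (restrictConf hsub) μ) ∧
    (Measure.map (restrictConf hsub) μ)
      {σ | ∃ η : E → ZMod 2, IsEvenConf η ∧ restrictConf hsub η = σ} = 1 ∧
    (∀ σ, σ ∉ {σ | ∃ η : E → ZMod 2, IsEvenConf η ∧ restrictConf hsub η = σ} →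
      (Measure.map (restrictConf hsub) μ) {σ} = 0) ∧
    (∀ σ σ', σ ∈ {σ | ∃ η : E → ZMod 2, IsEvenConf η ∧ restrictConf hsub η = σ} →
      σ' ∈ {σ | ∃ η : E → ZMod 2, IsEvenConf η ∧ restrictConf hsub η = σ} →
      (Measure.map (restrictConf hsub) μ) {σ} = (Measure.map (restrictConf hsub) μ) {σ'}) := by
  classical
  haveI := h1fin.to_subtype
  haveI : Finite (E1 → ZMod 2) := inferInstance
  haveI := msc_pi h1fin
  obtain ⟨hprob, heven, hinv⟩ := hμ
  set R : Set (E1 → ZMod 2) :=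
    {σ | ∃ η : E → ZMod 2, IsEvenConf η ∧ restrictConf hsub η = σ} with hRdef
  have hr := measurable_restrictConf hsub
  set ν : Measure (E1 → ZMod 2) := Measure.map (restrictConf hsub) μ with hν
  have hmeasAll : ∀ s : Set (E1 → ZMod 2), MeasurableSet s := fun s => s.toFinite.measurableSet
  have hνprob : IsProbabilityMeasure ν := Measure.isProbabilityMeasure_map hr.aemeasurable
  have hνR : ν R = 1 := by
    refine le_antisymm prob_le_one ?_
    rw [hν, Measure.map_apply hr (hmeasAll R)]
    calc (1 : ENNReal) = μ {ω | IsEvenConf ω} := heven.symm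
      _ ≤ μ (restrictConf hsub ⁻¹' R) := by
          apply measure_mono
          intro η hη
          exact ⟨η, hη, rfl⟩
  refine ⟨hνprob, hνR, ?_, ?_⟩
  · intro σ hσ
    have : ν {σ} ≤ ν Rᶜ := measure_mono (by simpa using hσ)
    have hRc : ν Rᶜ = 0 := by
      rw [measure_compl (hmeasAll R) (measure_ne_top ν R), hνR]
      simp
    exact le_antisymm (this.trans hRc.le) zero_le
  · -- translation invariance on R
    have hstep : ∀ τ ∈ R, ∀ σ : E1 → ZMod 2, ν {σ + τ} = ν {σ} := by
      intro τ hτ σ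
      obtain ⟨γ, hγeven, hγr⟩ := hτ
      have haddm : Measurable (fun x : E1 → ZMod 2 => x + τ) := fun s _ => hmeasAll _
      have hγm : Measurable (fun ω : E → ZMod 2 => ω + γ) := by
        rw [measurable_pi_iff]
        intro e
        exact Measurable.comp
          (fun t _ => (by trivial : MeasurableSet ((fun x : ZMod 2 => x + γ e) ⁻¹' t)))
          (measurable_pi_apply e)
      have hcomm : Measure.map (fun x : E1 → ZMod 2 => x + τ) ν = ν := by
        calc Measure.map (fun x => x + τ) ν
            = Measure.map ((fun x : E1 → ZMod 2 => x + τ) ∘ restrictConf hsub) μ :=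
              Measure.map_map haddm hr
          _ = Measure.map (restrictConf hsub ∘ (fun ω : E → ZMod 2 => ω + γ)) μ := by
              congr 1
              funext ω
              simp only [Function.comp_apply, restrictConf_add, hγr]
          _ = Measure.map (restrictConf hsub) (Measure.map (fun ω => ω + γ) μ) :=
              (Measure.map_map hr hγm).symm
          _ = ν := by rw [hinv γ hγeven]
      have hpre : (fun x : E1 → ZMod 2 => x + τ) ⁻¹' {σ} = {σ + τ} := by
        ext x
        simp only [Set.mem_preimage, Set.mem_singleton_iff]
        constructor
        · intro h
          rw [← h]
          funext e
          exact ((by decide : ∀ a b : ZMod 2, a = a + b + b) _ _)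
        · rintro rfl
          funext e
          exact ((by decide : ∀ a b : ZMod 2, a + b + b = a) _ _)
      calc ν {σ + τ} = (Measure.map (fun x : E1 → ZMod 2 => x + τ) ν) {σ} := by
            rw [Measure.map_apply haddm (hmeasAll _), hpre]
        _ = ν {σ} := by rw [hcomm]
    intro σ σ' hσ hσ'
    have hτR : σ + σ' ∈ R := by
      obtain ⟨η, hη, hηr⟩ := hσ
      obtain ⟨η', hη', hηr'⟩ := hσ'
      refine ⟨η + η', ?_, by rw [restrictConf_add, hηr, hηr']⟩
      intro v
      rw [srcAt_add _ _ _ (hfinE v), hη v, hη' v, add_zero]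
    have : σ + (σ + σ') = σ' := by
      funext e
      exact ((by decide : ∀ a b : ZMod 2, a + (a + b) = b) _ _)
    rw [← hstep (σ + σ') hτR σ, this]

lemma marginal_unique {E1 E E' : Set (Sym2 V)} (hsub : E1 ⊆ E) (hsub' : E1 ⊆ E')
    (h1fin : E1.Finite)
    (hfinE : ∀ v : V, {e : E | v ∈ (e : Sym2 V)}.Finite)
    (hfinE' : ∀ v : V, {e : E' | v ∈ (e : Sym2 V)}.Finite)
    (μ : Measure (E → ZMod 2)) (μ' : Measure (E' → ZMod 2))
    (hμ : IsUEG E μ) (hμ' : IsUEG E' μ')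
    (hRR : ∀ σ : E1 → ZMod 2,
      (∃ η : E → ZMod 2, IsEvenConf η ∧ restrictConf hsub η = σ) ↔
      (∃ η : E' → ZMod 2, IsEvenConf η ∧ restrictConf hsub' η = σ)) :
    Measure.map (restrictConf hsub) μ = Measure.map (restrictConf hsub') μ' := by
  classical
  haveI := h1fin.to_subtype
  haveI : Finite (E1 → ZMod 2) := inferInstance
  haveI := msc_pi h1fin
  obtain ⟨hp, hR1, hz, hc⟩ := marginal_props hsub h1fin hfinE μ hμ
  obtain ⟨hp', hR1', hz', hc'⟩ := marginal_props hsub' h1fin hfinE' μ' hμ'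
  set R : Set (E1 → ZMod 2) :=
    {σ | ∃ η : E → ZMod 2, IsEvenConf η ∧ restrictConf hsub η = σ} with hRdef
  have hReq : {σ : E1 → ZMod 2 | ∃ η : E' → ZMod 2, IsEvenConf η ∧ restrictConf hsub' η = σ}
      = R := by
    ext σ; exact (hRR σ).symm
  rw [hReq] at hR1' hz' hc'
  set ν := Measure.map (restrictConf hsub) μ with hν
  set ν' := Measure.map (restrictConf hsub') μ' with hν'
  refine Measure.ext_iff_singleton.mpr (fun σ => ?_)
  by_cases hσ : σ ∈ R
  · -- sum over R
    set Rfin := R.toFinite.toFinset with hRfin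
    have hsum : ∀ (m : Measure (E1 → ZMod 2)), (∀ x ∈ R, m {x} = m {σ}) → m R = 1 →
        (Rfin.card : ENNReal) * m {σ} = 1 := by
      intro m hconst hm1
      have hcover : R = ⋃ x ∈ Rfin, {x} := by
        simp [hRfin]
      have : m R = ∑ x ∈ Rfin, m {x} := by
        rw [hcover]
        exact measure_biUnion_finset
          (fun x _ y _ hxy => by simp [Set.disjoint_singleton, hxy])
          (fun x _ => (Set.toFinite _).measurableSet)
      rw [this] at hm1
      rw [← hm1]
      rw [Finset.sum_congr rfl (fun x hx => hconst x (by simpa [hRfin] using hx))]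
      rw [Finset.sum_const, nsmul_eq_mul]
    have hcard0 : (Rfin.card : ENNReal) ≠ 0 := by
      have : σ ∈ Rfin := by simpa [hRfin] using hσ
      simp only [ne_eq, Nat.cast_eq_zero, Finset.card_eq_zero]
      intro h
      rw [h] at this
      simp at this
    have hcardtop : (Rfin.card : ENNReal) ≠ ⊤ := ENNReal.natCast_ne_top _
    have h1 := hsum ν (fun x hx => hc x σ hx hσ) hR1
    have h2 := hsum ν' (fun x hx => hc' x σ hx hσ) hR1'
    have hval : ∀ x : ENNReal, (Rfin.card : ENNReal) * x = 1 → x = (Rfin.card : ENNReal)⁻¹ := by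
      intro x hx
      rw [← one_mul x, ← ENNReal.inv_mul_cancel hcard0 hcardtop, mul_assoc, hx, mul_one]
    rw [hval _ h1, hval _ h2]
  · rw [hz σ hσ, hz' σ hσ]

end UegAux

theorem ueg_marginal_separating_surface {V : Type}
    (E1 E2 E3 : Set (Sym2 V))
    (hd12 : Disjoint E1 E2) (hd13 : Disjoint E1 E3) (hd23 : Disjoint E2 E3)
    (h1fin : E1.Finite) (h2fin : E2.Finite)
    (hsimple : ∀ e ∈ E1 ∪ E2 ∪ E3, ¬ e.IsDiag)
    (hlf : ∀ v : V, {e : Sym2 V | e ∈ E1 ∪ E2 ∪ E3 ∧ v ∈ e}.Finite)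
    (hWne : (eVerts E2).Nonempty)
    (hWconn : ∀ x ∈ eVerts E2, ∀ y ∈ eVerts E2,
      (SimpleGraph.fromEdgeSet E2).Reachable x y)
    (hsep : ∀ x y : V, x ∈ eVerts E1 → y ∈ eVerts E3 →
      ∀ p : (SimpleGraph.fromEdgeSet (E1 ∪ E2 ∪ E3)).Walk x y,
        ∃ w ∈ eVerts E2, w ∈ p.support) :
    (∀ σ : E1 → ZMod 2,
      (∃ η : ↥(E1 ∪ E2) → ZMod 2, IsEvenConf η ∧
        restrictConf (Set.subset_union_left : E1 ⊆ E1 ∪ E2) η = σ) ↔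
      (∃ η : ↥(E1 ∪ E2 ∪ E3) → ZMod 2, IsEvenConf η ∧
        restrictConf (Set.subset_union_left.trans Set.subset_union_left :
          E1 ⊆ E1 ∪ E2 ∪ E3) η = σ)) ∧
    (∃ μ, IsUEG (E1 ∪ E2) μ) ∧ (∃ μ, IsUEG (E1 ∪ E2 ∪ E3) μ) ∧
    (∀ μ₂ μ₃, IsUEG (E1 ∪ E2) μ₂ → IsUEG (E1 ∪ E2 ∪ E3) μ₃ →
      Measure.map (restrictConf (Set.subset_union_left : E1 ⊆ E1 ∪ E2)) μ₂
        = Measure.map (restrictConf (Set.subset_union_left.trans Set.subset_union_left :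
            E1 ⊆ E1 ∪ E2 ∪ E3)) μ₃) := by
  classical
  have hsep13 : eVerts E1 ∩ eVerts E3 ⊆ eVerts E2 := by
    rintro v ⟨hv1, hv3⟩
    obtain ⟨w, hw, hws⟩ := hsep v v hv1 hv3 SimpleGraph.Walk.nil
    have hwv : w = v := by simpa using hws
    exact hwv ▸ hw
  have hfinE : ∀ v : V, {e : ↥(E1 ∪ E2 ∪ E3) | v ∈ (e : Sym2 V)}.Finite :=
    fun v => UegAux.incid_of_hlf hlf v
  have hfin12 : ∀ v : V, {e : ↥(E1 ∪ E2) | v ∈ (e : Sym2 V)}.Finite :=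
    fun v => UegAux.incid_mono Set.subset_union_left v (hfinE v)
  have hpart1 : ∀ σ : E1 → ZMod 2,
      (∃ η : ↥(E1 ∪ E2) → ZMod 2, IsEvenConf η ∧
        restrictConf (Set.subset_union_left : E1 ⊆ E1 ∪ E2) η = σ) ↔
      (∃ η : ↥(E1 ∪ E2 ∪ E3) → ZMod 2, IsEvenConf η ∧
        restrictConf (Set.subset_union_left.trans Set.subset_union_left :
          E1 ⊆ E1 ∪ E2 ∪ E3) η = σ) :=
    fun σ => UegAux.part1 hd12 h1fin h2fin hsimple hlf hWconn hsep13 σ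
  refine ⟨hpart1, UegAux.ueg_exists hfin12, UegAux.ueg_exists hfinE, ?_⟩
  intro μ₂ μ₃ h₂ h₃
  exact UegAux.marginal_unique _ _ h1fin hfin12 hfinE μ₂ μ₃ h₂ h₃ hpart1
end
end
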